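/- arXiv:1910.10612 — 10 statements merged into one kernel-verified Lean document; each statement's English description precedes it below -/
import Mathlib

section
/- For every finite simple graph G and every vertex v of G, there exists a finite sequence of vertices v_1, …, v_m such that v is an isolated vertex of the graph μ_{v_m}(μ_{v_{m−1}}(⋯ μ_{v_1}(G) ⋯)) obtained by successively applying the mutations μ_{v_1}, …, μ_{v_m} to G. -/
open Classical Finset

noncomputable section

/-- The mutation `μ_v(G)` of a graph `G` at a vertex `v`: edges not incident to `v`
are those of `G`; edges incident to `v` are the pairs `vw` with `w ≠ v`, `w ∉ N_G(v)`. -/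
def mutation {V : Type*} (G : SimpleGraph V) (v : V) : SimpleGraph V where
  Adj x y := x ≠ y ∧
    ((x = v ∧ ¬ G.Adj v y) ∨ (y = v ∧ ¬ G.Adj v x) ∨ (x ≠ v ∧ y ≠ v ∧ G.Adj x y))
  symm := by
    constructor
    rintro x y ⟨hxy, h | h | ⟨h1, h2, h3⟩⟩
    · exact ⟨hxy.symm, Or.inr (Or.inl h)⟩
    · exact ⟨hxy.symm, Or.inl h⟩
    · exact ⟨hxy.symm, Or.inr (Or.inr ⟨h2, h1, h3.symm⟩)⟩
  loopless := by
    constructor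
    rintro x ⟨hxx, -⟩
    exact hxx rfl

/-- The relative mutation `μ_{v←u}(G)` of `G` at `v` with respect to `u`: edges not
incident to `v` are those of `G`; edges incident to `v` are the pairs `vw` with
`w ≠ v` and `w` in the symmetric difference `N_G(u) Δ N_G(v)`. -/
def relMutation {V : Type*} (G : SimpleGraph V) (v u : V) : SimpleGraph V where
  Adj x y := x ≠ y ∧
    ((x = v ∧ (G.Adj u y ↔ ¬ G.Adj v y)) ∨ (y = v ∧ (G.Adj u x ↔ ¬ G.Adj v x)) ∨
      (x ≠ v ∧ y ≠ v ∧ G.Adj x y))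
  symm := by
    constructor
    rintro x y ⟨hxy, h | h | ⟨h1, h2, h3⟩⟩
    · exact ⟨hxy.symm, Or.inr (Or.inl h)⟩
    · exact ⟨hxy.symm, Or.inl h⟩
    · exact ⟨hxy.symm, Or.inr (Or.inr ⟨h2, h1, h3.symm⟩)⟩
  loopless := by
    constructor
    rintro x ⟨hxx, -⟩
    exact hxx rfl

/-- A vertex is isolated if it has no neighbors. -/
def isIsolated {V : Type*} (G : SimpleGraph V) (v : V) : Prop := ∀ w, ¬ G.Adj v w

/-- `pairGraph a b` is the graph `G(a,b)` on `2a+b` vertices consisting of `a`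
pairwise disjoint edges `{0,1}, {2,3}, …` together with `b` isolated vertices. -/
def pairGraph (a b : ℕ) : SimpleGraph (Fin (2 * a + b)) where
  Adj x y := x ≠ y ∧ (x : ℕ) / 2 = (y : ℕ) / 2 ∧ (x : ℕ) < 2 * a
  symm := by
    constructor
    rintro x y ⟨h1, h2, h3⟩
    exact ⟨h1.symm, h2.symm, by omega⟩
  loopless := by
    constructor
    rintro x ⟨hxx, -⟩
    exact hxx rfl

/-- The adjacency matrix `M(G)` of `G`, over `F_2`. -/
def adjMat {n : ℕ} (G : SimpleGraph (Fin n)) : Matrix (Fin n) (Fin n) (ZMod 2) :=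
  fun i j => if G.Adj i j then 1 else 0

/-- The matrix `X(G)` over `F_2`: upper-left `n×n` block is `M(G)`, and the last row
and column consist entirely of `1`'s except for the `(n+1, n+1)` entry, which is `0`. -/
def Xmat {n : ℕ} (G : SimpleGraph (Fin n)) :
    Matrix (Fin (n + 1)) (Fin (n + 1)) (ZMod 2) :=
  fun i j =>
    if hi : (i : ℕ) < n then
      if hj : (j : ℕ) < n then adjMat G ⟨i, hi⟩ ⟨j, hj⟩ else 1
    else if (j : ℕ) < n then 1 else 0

/-- Finite simple graphs on vertex sets `{1, …, n}`, bundled with `n`. -/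
abbrev GraphOn := Σ n : ℕ, SimpleGraph (Fin n)

/-- One move: either pass to an isomorphic graph, or apply a mutation `μ_v`, or apply a
relative mutation `μ_{v←w}` to a graph containing an isolated vertex `u ∉ {v, w}`. -/
inductive MoveStep : GraphOn → GraphOn → Prop
  | iso {n m : ℕ} (G : SimpleGraph (Fin n)) (H : SimpleGraph (Fin m)) :
      Nonempty (G ≃g H) → MoveStep ⟨n, G⟩ ⟨m, H⟩
  | mut {n : ℕ} (G : SimpleGraph (Fin n)) (v : Fin n) :
      MoveStep ⟨n, G⟩ ⟨n, mutation G v⟩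
  | relMut {n : ℕ} (G : SimpleGraph (Fin n)) (v w u : Fin n) :
      v ≠ w → u ≠ v → u ≠ w → isIsolated G u →
      MoveStep ⟨n, G⟩ ⟨n, relMutation G v w⟩

/-- `G ≈ G'`: `G'` is obtained from `G`, up to graph isomorphism, by a finite
sequence of mutations and relative mutations (the latter in the presence of an
isolated vertex distinct from the two vertices involved). -/
def graphEquiv (A B : GraphOn) : Prop := Relation.ReflTransGen MoveStep A B

/-- The induced subgraph of `G` on `{i, j, k}` has an even number of edges. -/
def evenTriple {V : Type*} (G : SimpleGraph V) (i j k : V) : Prop :=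
  Even ((if G.Adj i j then 1 else 0) + (if G.Adj i k then 1 else 0) +
    (if G.Adj j k then 1 else 0) : ℕ)

/-- `ℓ(G)`: the number of 2-element subsets `{i, j}` (encoded as pairs `i < j`) such
that for every vertex `k ∉ {i, j}` the induced subgraph of `G` on `{i, j, k}` has an
even number of edges. -/
def ell {n : ℕ} (G : SimpleGraph (Fin n)) : ℕ :=
  ((univ : Finset (Fin n × Fin n)).filter
    (fun p => p.1 < p.2 ∧ ∀ k, k ≠ p.1 → k ≠ p.2 → evenTriple G p.1 p.2 k)).card

/-- `J(G)`: the set of 2-element subsets `{i, j}` (encoded as pairs `i < j`) with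
`N_G(i) = N_G(j) ≠ ∅`. -/
def Jfinset {n : ℕ} (G : SimpleGraph (Fin n)) : Finset (Fin n × Fin n) :=
  (univ : Finset (Fin n × Fin n)).filter
    (fun p => p.1 < p.2 ∧ G.neighborSet p.1 = G.neighborSet p.2 ∧
      G.neighborSet p.1 ≠ ∅)

/-- `j(G) = #J(G)`. -/
def jnum {n : ℕ} (G : SimpleGraph (Fin n)) : ℕ := (Jfinset G).card

/-- `i(G)`: the number of isolated vertices of `G`. -/
def numIso {n : ℕ} (G : SimpleGraph (Fin n)) : ℕ :=
  ((univ : Finset (Fin n)).filter (fun v => isIsolated G v)).card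

end
/-- For every finite simple graph `G` and every vertex `v`, there is a
finite sequence of vertices `v₁, …, vₘ` such that `v` is isolated in
`μ_{vₘ}(⋯ μ_{v₁}(G) ⋯)`. -/
theorem stmt_0 {n : ℕ} (G : SimpleGraph (Fin n)) (v : Fin n) :
    ∃ l : List (Fin n), isIsolated (l.foldl mutation G) v := by
  classical
  generalize h : (univ.filter (fun x => G.Adj v x)).card = d
  induction d generalizing G with
  | zero =>
    refine ⟨[], fun x hx => ?_⟩
    have hx' : x ∈ (univ.filter (fun x => G.Adj v x)) :=
      Finset.mem_filter.mpr ⟨Finset.mem_univ x, hx⟩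
    rw [Finset.card_eq_zero.mp h] at hx'
    exact absurd hx' (Finset.notMem_empty x)
  | succ d ih =>
    have hpos : 0 < (univ.filter (fun x => G.Adj v x)).card := by omega
    obtain ⟨w, hw⟩ := Finset.card_pos.mp hpos
    have hadj : G.Adj v w := by simpa using hw
    have hvw : v ≠ w := G.ne_of_adj hadj
    have key : ∀ x, (mutation G w).Adj v x ↔ (G.Adj v x ∧ x ≠ w) := by
      intro x
      constructor
      · rintro ⟨hvx, ⟨h1, -⟩ | ⟨h1, h2⟩ | ⟨h1, h2, h3⟩⟩
        · exact absurd h1 hvw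
        · subst h1
          exact absurd (hadj.symm) h2
        · exact ⟨h3, h2⟩
      · rintro ⟨h1, h2⟩
        exact ⟨G.ne_of_adj h1, Or.inr (Or.inr ⟨hvw, h2, h1⟩)⟩
    have hset : (univ.filter (fun x => (mutation G w).Adj v x)) =
        (univ.filter (fun x => G.Adj v x)).erase w := by
      ext x
      simp only [Finset.mem_filter, Finset.mem_erase, Finset.mem_univ, true_and, key]
      tauto
    have hcard : (univ.filter (fun x => (mutation G w).Adj v x)).card = d := by
      rw [hset, Finset.card_erase_of_mem (by simpa using hadj)]
      omega
    obtain ⟨l, hl⟩ := ih (mutation G w) hcard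
    exact ⟨w :: l, hl⟩
end

section
/- Let G be a finite simple graph, let v be a vertex of G, and let u_1, …, u_m be an enumeration, in any order and without repetition, of all neighbors of v in G. Then v is an isolated vertex of the graph μ_{u_m}(⋯ μ_{u_1}(G) ⋯) obtained by successively applying the mutations μ_{u_1}, …, μ_{u_m} to G. -/
open Classical Finset

lemma mutation_aux {n : ℕ} (v : Fin n) :
    ∀ (l : List (Fin n)) (G : SimpleGraph (Fin n)), v ∉ l → l.Nodup →
      ∀ w, ((l.foldl mutation G).Adj v w ↔ (w ≠ v ∧ (G.Adj v w ↔ w ∉ l))) := by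
  intro l
  induction l with
  | nil =>
    intro G _ _ w
    simp only [List.foldl_nil, List.not_mem_nil, not_false_iff, iff_true]
    constructor
    · intro h; exact ⟨(G.ne_of_adj h).symm, h⟩
    · exact fun h => h.2
  | cons u t ih =>
    intro G hv hnd w
    have hvu : v ≠ u := fun h => hv (h ▸ (List.mem_cons_self : u ∈ u :: t))
    have hvt : v ∉ t := fun h => hv (List.mem_cons_of_mem u h)
    have hut : u ∉ t := (List.nodup_cons.mp hnd).1
    rw [List.foldl_cons, ih (mutation G u) hvt (List.nodup_cons.mp hnd).2 w]
    by_cases hwu : w = u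
    · have hadj : (mutation G u).Adj v w ↔ ¬ G.Adj v w := by
        subst hwu
        simp only [mutation]
        constructor
        · rintro ⟨-, h | h | h⟩
          · exact absurd h.1 hvu
          · exact fun ha => h.2 (G.adj_symm ha)
          · exact absurd rfl h.2.1
        · intro h2
          exact ⟨hvu, Or.inr (Or.inl ⟨trivial, fun ha => h2 (G.adj_symm ha)⟩)⟩
      have hwt : w ∉ t := hwu ▸ hut
      have hwc : w ∈ u :: t := hwu ▸ (List.mem_cons_self : u ∈ u :: t)
      rw [hadj]
      simp only [hwt, not_false_iff, iff_true, hwc, not_true, iff_false, not_not]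
    · have heq : (mutation G u).Adj v w ↔ G.Adj v w := by
        simp only [mutation]
        constructor
        · rintro ⟨h1, h2 | h2 | h2⟩
          · exact absurd h2.1 hvu
          · exact absurd h2.1 hwu
          · exact h2.2.2
        · intro h
          exact ⟨fun he => G.ne_of_adj h he, Or.inr (Or.inr ⟨hvu, hwu, h⟩)⟩
      rw [heq]
      simp only [List.mem_cons, hwu, false_or]

/-- If `l` enumerates, in any order and without repetition, all the
neighbors of `v` in `G`, then `v` is isolated after successively mutating at the
vertices of `l`. -/
theorem stmt_1 {n : ℕ} (G : SimpleGraph (Fin n)) (v : Fin n) (l : List (Fin n))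
    (hnodup : l.Nodup) (hmem : ∀ w, w ∈ l ↔ G.Adj v w) :
    isIsolated (l.foldl mutation G) v := by
  intro w hw
  have hvl : v ∉ l := fun h => G.loopless.irrefl v ((hmem v).mp h)
  rw [mutation_aux v l G hvl hnodup w] at hw
  rcases hw with ⟨h1, h2⟩
  rw [hmem w] at h2
  by_cases h : G.Adj v w
  · exact (h2.mp h) h
  · exact h (h2.mpr h)
end

section
/- Let G be a finite simple graph on n vertices having at least one isolated vertex. Then there exist nonnegative integers α and β with 2α + β = n and β > 0, and a finite sequence of relative mutations μ_{v_1←w_1}, …, μ_{v_k←w_k}, such that μ_{v_k←w_k}(μ_{v_{k−1}←w_{k−1}}(⋯ μ_{v_1←w_1}(G) ⋯)) is isomorphic to the graph G(α,β) consisting of α disjoint edges and β isolated vertices. -/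
open Classical Finset

section Aux

open Classical

variable {n : ℕ}

/-- Fold a list of relative mutations. -/
def mfold (l : List (Fin n × Fin n)) (G : SimpleGraph (Fin n)) : SimpleGraph (Fin n) :=
  l.foldl (fun H p => relMutation H p.1 p.2) G

@[simp] lemma mfold_nil (G : SimpleGraph (Fin n)) : mfold [] G = G := rfl

@[simp] lemma mfold_cons (p : Fin n × Fin n) (l : List (Fin n × Fin n))
    (G : SimpleGraph (Fin n)) : mfold (p :: l) G = mfold l (relMutation G p.1 p.2) := rfl

lemma mfold_append (l1 l2 : List (Fin n × Fin n)) (G : SimpleGraph (Fin n)) :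
    mfold (l1 ++ l2) G = mfold l2 (mfold l1 G) := by
  simp [mfold, List.foldl_append]

lemma relMutation_adj_of_ne {V : Type*} (G : SimpleGraph V) (v u : V) {x y : V}
    (hx : x ≠ v) (hy : y ≠ v) : (relMutation G v u).Adj x y ↔ G.Adj x y := by
  constructor
  · rintro ⟨hxy, h | h | ⟨-, -, h⟩⟩
    · exact absurd h.1 hx
    · exact absurd h.1 hy
    · exact h
  · intro h
    exact ⟨h.ne, Or.inr (Or.inr ⟨hx, hy, h⟩)⟩

lemma relMutation_adj_left {V : Type*} (G : SimpleGraph V) (v u : V) {y : V}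
    (hy : y ≠ v) : (relMutation G v u).Adj v y ↔ (G.Adj u y ↔ ¬ G.Adj v y) := by
  constructor
  · rintro ⟨hxy, h | h | ⟨hv, -, -⟩⟩
    · exact h.2
    · exact absurd h.1 hy
    · exact absurd rfl hv
  · intro h
    exact ⟨Ne.symm hy, Or.inl ⟨rfl, h⟩⟩

lemma clearOne (G : SimpleGraph (Fin n)) (a b w : Fin n) (hab : G.Adj a b)
    (hwa : w ≠ a) (hwb : w ≠ b) :
    ∃ l : List (Fin n × Fin n), (∀ p ∈ l, p.1 ≠ p.2) ∧
      (∀ x y, x ≠ w → y ≠ w → ((mfold l G).Adj x y ↔ G.Adj x y)) ∧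
      (¬ (mfold l G).Adj w a) ∧ (¬ (mfold l G).Adj w b) ∧
      (∀ y, ¬ G.Adj a y → ¬ G.Adj b y → ¬ G.Adj w y → ¬ (mfold l G).Adj w y) ∧
      (∀ x, isIsolated G x → isIsolated (mfold l G) x) := by
  have haw : a ≠ w := Ne.symm hwa
  have hbw : b ≠ w := Ne.symm hwb
  by_cases h1 : G.Adj w a <;> by_cases h2 : G.Adj w b
  · -- adjacent to both : first μ_{w←b}, then μ_{w←a}
    have hG1 : ∀ x y, x ≠ w → y ≠ w →
        ((relMutation G w b).Adj x y ↔ G.Adj x y) := fun x y hx hy =>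
      relMutation_adj_of_ne G w b hx hy
    have hG1w : ∀ y, y ≠ w → ((relMutation G w b).Adj w y ↔ (G.Adj b y ↔ ¬ G.Adj w y)) :=
      fun y hy => relMutation_adj_left G w b hy
    have hHw : ∀ y, y ≠ w →
        ((mfold [(w, b), (w, a)] G).Adj w y ↔
          ((relMutation G w b).Adj a y ↔ ¬ (relMutation G w b).Adj w y)) := by
      intro y hy
      simpa using relMutation_adj_left (relMutation G w b) w a hy
    have hH : ∀ x y, x ≠ w → y ≠ w →
        ((mfold [(w, b), (w, a)] G).Adj x y ↔ G.Adj x y) := by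
      intro x y hx hy
      simp only [mfold_cons, mfold_nil]
      rw [relMutation_adj_of_ne _ w a hx hy, relMutation_adj_of_ne _ w b hx hy]
    refine ⟨[(w, b), (w, a)], ?_, hH, ?_, ?_, ?_, ?_⟩
    · intro p hp
      simp only [List.mem_cons, List.not_mem_nil, or_false] at hp
      rcases hp with rfl | rfl
      · exact hwb
      · exact hwa
    · rw [hHw a haw, hG1w a haw]
      simp [hab.symm, h1]
    · rw [hHw b hbw, hG1 a b haw hbw, hG1w b hbw]
      simp [hab, h2]
    · intro y hay hby hwy
      by_cases hyw : y = w
      · subst hyw; simp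
      · rw [hHw y hyw, hG1 a y haw hyw, hG1w y hyw]
        simp [hay, hby, hwy]
    · intro x hx
      have hxw : x ≠ w := by rintro rfl; exact hx a h1
      have hax : ¬ G.Adj a x := fun h => hx a h.symm
      have hbx : ¬ G.Adj b x := fun h => hx b h.symm
      have hwx : ¬ G.Adj w x := fun h => hx w h.symm
      intro y
      by_cases hyw : y = w
      · subst hyw
        intro hadj
        have h' := hadj.symm
        rw [hHw x hxw, hG1 a x haw hxw, hG1w x hxw] at h'
        simp [hax, hbx, hwx] at h'
      · intro hadj
        rw [hH x y hxw hyw] at hadj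
        exact hx y hadj
  · -- adjacent only to a : μ_{w←b}
    have hG1 : ∀ x y, x ≠ w → y ≠ w →
        ((mfold [(w, b)] G).Adj x y ↔ G.Adj x y) := fun x y hx hy =>
      relMutation_adj_of_ne G w b hx hy
    have hG1w : ∀ y, y ≠ w → ((mfold [(w, b)] G).Adj w y ↔ (G.Adj b y ↔ ¬ G.Adj w y)) :=
      fun y hy => relMutation_adj_left G w b hy
    refine ⟨[(w, b)], ?_, hG1, ?_, ?_, ?_, ?_⟩
    · intro p hp
      simp only [List.mem_cons, List.not_mem_nil, or_false] at hp
      rcases hp with rfl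
      exact hwb
    · rw [hG1w a haw]; simp [hab.symm, h1]
    · rw [hG1w b hbw]; simp [h2]
    · intro y hay hby hwy
      by_cases hyw : y = w
      · subst hyw; simp
      · rw [hG1w y hyw]; simp [hby, hwy]
    · intro x hx
      have hxw : x ≠ w := by rintro rfl; exact hx a h1
      have hbx : ¬ G.Adj b x := fun h => hx b h.symm
      have hwx : ¬ G.Adj w x := fun h => hx w h.symm
      intro y
      by_cases hyw : y = w
      · subst hyw
        intro hadj
        have h' := hadj.symm
        rw [hG1w x hxw] at h'
        simp [hbx, hwx] at h'
      · intro hadj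
        rw [hG1 x y hxw hyw] at hadj
        exact hx y hadj
  · -- adjacent only to b : μ_{w←a}
    have hG1 : ∀ x y, x ≠ w → y ≠ w →
        ((mfold [(w, a)] G).Adj x y ↔ G.Adj x y) := fun x y hx hy =>
      relMutation_adj_of_ne G w a hx hy
    have hG1w : ∀ y, y ≠ w → ((mfold [(w, a)] G).Adj w y ↔ (G.Adj a y ↔ ¬ G.Adj w y)) :=
      fun y hy => relMutation_adj_left G w a hy
    refine ⟨[(w, a)], ?_, hG1, ?_, ?_, ?_, ?_⟩
    · intro p hp
      simp only [List.mem_cons, List.not_mem_nil, or_false] at hp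
      rcases hp with rfl
      exact hwa
    · rw [hG1w a haw]; simp [h1]
    · rw [hG1w b hbw]; simp [hab, h2]
    · intro y hay hby hwy
      by_cases hyw : y = w
      · subst hyw; simp
      · rw [hG1w y hyw]; simp [hay, hwy]
    · intro x hx
      have hxw : x ≠ w := by rintro rfl; exact hx b h2
      have hax : ¬ G.Adj a x := fun h => hx a h.symm
      have hwx : ¬ G.Adj w x := fun h => hx w h.symm
      intro y
      by_cases hyw : y = w
      · subst hyw
        intro hadj
        have h' := hadj.symm
        rw [hG1w x hxw] at h'
        simp [hax, hwx] at h'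
      · intro hadj
        rw [hG1 x y hxw hyw] at hadj
        exact hx y hadj
  · -- adjacent to neither
    refine ⟨[], by simp, by simp, by simpa using h1, by simpa using h2, ?_, by simp⟩
    intro y _ _ h
    simpa using h

lemma clearList (a b : Fin n) (ws : List (Fin n)) :
    ∀ (G : SimpleGraph (Fin n)), G.Adj a b → (∀ w ∈ ws, w ≠ a ∧ w ≠ b) →
      ∃ l : List (Fin n × Fin n), (∀ p ∈ l, p.1 ≠ p.2) ∧
        (∀ x y, x ∉ ws → y ∉ ws → ((mfold l G).Adj x y ↔ G.Adj x y)) ∧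
        (∀ w ∈ ws, ¬ (mfold l G).Adj w a ∧ ¬ (mfold l G).Adj w b) ∧
        (∀ v, v ∉ ws → ¬ G.Adj v a → ¬ G.Adj v b →
          ∀ y, ¬ G.Adj v y → ¬ (mfold l G).Adj v y) ∧
        (∀ x, isIsolated G x → isIsolated (mfold l G) x) := by
  induction ws with
  | nil =>
    intro G hab hws
    exact ⟨[], by simp, by simp, by simp, fun v _ _ _ y h => by simpa using h, by simp⟩
  | cons w ws ih =>
    intro G hab hws
    have hwa : w ≠ a := (hws w (List.mem_cons_self (a := w) (l := ws))).1
    have hwb : w ≠ b := (hws w (List.mem_cons_self (a := w) (l := ws))).2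
    obtain ⟨l1, hl1, h1loc, h1wa, h1wb, h1new, h1iso⟩ := clearOne G a b w hab hwa hwb
    set G1 := mfold l1 G with hG1def
    have hanw : a ≠ w := Ne.symm hwa
    have hbnw : b ≠ w := Ne.symm hwb
    have hab1 : G1.Adj a b := (h1loc a b hanw hbnw).mpr hab
    obtain ⟨l2, hl2, h2loc, h2cl, h2new, h2iso⟩ :=
      ih G1 hab1 (fun w' hw' => hws w' (List.mem_cons_of_mem w hw'))
    have hfold : mfold (l1 ++ l2) G = mfold l2 G1 := by rw [mfold_append, ← hG1def]
    refine ⟨l1 ++ l2, ?_, ?_, ?_, ?_, ?_⟩ <;> (try rw [hfold])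
    · intro p hp
      rcases List.mem_append.mp hp with h | h
      · exact hl1 p h
      · exact hl2 p h
    · intro x y hx hy
      have hxw : x ≠ w := fun h => hx (h ▸ List.mem_cons_self (a := w) (l := ws))
      have hyw : y ≠ w := fun h => hy (h ▸ List.mem_cons_self (a := w) (l := ws))
      have hxws : x ∉ ws := fun h => hx (List.mem_cons_of_mem w h)
      have hyws : y ∉ ws := fun h => hy (List.mem_cons_of_mem w h)
      rw [h2loc x y hxws hyws, h1loc x y hxw hyw]
    · intro w' hw'
      rcases List.mem_cons.mp hw' with rfl | hw'
      · -- w' = w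
        by_cases hwws : w' ∈ ws
        · exact h2cl w' hwws
        · have hanws : a ∉ ws := fun h => (hws a (List.mem_cons_of_mem w' h)).1 rfl
          have hbnws : b ∉ ws := fun h => (hws b (List.mem_cons_of_mem w' h)).2 rfl
          constructor
          · rw [h2loc w' a hwws hanws]; exact h1wa
          · rw [h2loc w' b hwws hbnws]; exact h1wb
      · exact h2cl w' hw'
    · intro v hv hva hvb y hvy
      have hvw : v ≠ w := fun h => hv (h ▸ List.mem_cons_self (a := w) (l := ws))
      have hvws : v ∉ ws := fun h => hv (List.mem_cons_of_mem w h)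
      have hva1 : ¬ G1.Adj v a := by rw [h1loc v a hvw hanw]; exact hva
      have hvb1 : ¬ G1.Adj v b := by rw [h1loc v b hvw hbnw]; exact hvb
      refine h2new v hvws hva1 hvb1 y ?_
      by_cases hyw : y = w
      · subst hyw
        intro h
        exact h1new v (fun h' => hva h'.symm) (fun h' => hvb h'.symm)
          (fun h' => hvy h'.symm) h.symm
      · rw [h1loc v y hvw hyw]; exact hvy
    · intro x hx
      exact h2iso x (h1iso x hx)

lemma clearAll (u : Fin n) (S : Finset (Fin n)) :
    ∀ (G : SimpleGraph (Fin n)), isIsolated G u →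
      (∀ v, v ∉ S → (∀ w, G.Adj v w → w ∉ S) ∧ (∀ w x, G.Adj v w → G.Adj v x → w = x)) →
      ∃ l : List (Fin n × Fin n), (∀ p ∈ l, p.1 ≠ p.2) ∧
        isIsolated (mfold l G) u ∧
        (∀ v w x, (mfold l G).Adj v w → (mfold l G).Adj v x → w = x) := by
  induction S using Finset.strongInduction with
  | _ S IH =>
    intro G hu hinv
    by_cases hedge : ∃ a ∈ S, ∃ b, G.Adj a b
    · obtain ⟨a, haS, b, hab⟩ := hedge
      have hbS : b ∈ S := by
        by_contra hbS
        exact (hinv b hbS).1 a hab.symm haS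
      have hane : a ≠ b := hab.ne
      -- the list of vertices to clear
      set ws : List (Fin n) := ((S.erase a).erase b).toList with hwsdef
      have hmemws : ∀ w, w ∈ ws ↔ (w ≠ b ∧ w ≠ a ∧ w ∈ S) := by
        intro w
        rw [hwsdef, Finset.mem_toList, Finset.mem_erase, Finset.mem_erase]
      have hwsab : ∀ w ∈ ws, w ≠ a ∧ w ≠ b := by
        intro w hw
        rw [hmemws] at hw
        exact ⟨hw.2.1, hw.1⟩
      have hanws : a ∉ ws := fun h => ((hmemws a).mp h).2.1 rfl
      have hbnws : b ∉ ws := fun h => ((hmemws b).mp h).1 rfl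
      obtain ⟨l1, hl1, h1loc, h1cl, h1new, h1iso⟩ := clearList a b ws G hab hwsab
      set G1 := mfold l1 G with hG1def
      -- vertices outside S keep their adjacencies
      have houtS : ∀ v, v ∉ S → ∀ y, G1.Adj v y ↔ G.Adj v y := by
        intro v hvS y
        have hvnws : v ∉ ws := fun h => hvS ((hmemws v).mp h).2.2
        by_cases hyws : y ∈ ws
        · have hyS : y ∈ S := ((hmemws y).mp hyws).2.2
          have hGvy : ¬ G.Adj v y := fun h => (hinv v hvS).1 y h hyS
          have hGva : ¬ G.Adj v a := fun h => (hinv v hvS).1 a h haS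
          have hGvb : ¬ G.Adj v b := fun h => (hinv v hvS).1 b h hbS
          constructor
          · intro h; exact absurd h (h1new v hvnws hGva hGvb y hGvy)
          · intro h; exact absurd h hGvy
        · exact h1loc v y hvnws hyws
      -- a's neighbourhood in G1 is exactly {b}
      have haAdj : ∀ y, G1.Adj a y ↔ y = b := by
        intro y
        constructor
        · intro h
          by_contra hyb
          by_cases hyws : y ∈ ws
          · exact (h1cl y hyws).1 h.symm
          · by_cases hya : y = a
            · subst hya; exact G1.irrefl h
            · have hyS : y ∉ S := fun hyS =>
                hyws ((hmemws y).mpr ⟨hyb, hya, hyS⟩)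
              have : G.Adj y a := by
                have := (houtS y hyS a).mp h.symm
                exact this
              exact (hinv y hyS).1 a this haS
        · intro hy
          rw [hy]
          exact (h1loc a b hanws hbnws).mpr hab
      have hbAdj : ∀ y, G1.Adj b y ↔ y = a := by
        intro y
        constructor
        · intro h
          by_contra hya
          by_cases hyws : y ∈ ws
          · exact (h1cl y hyws).2 h.symm
          · by_cases hyb : y = b
            · subst hyb; exact G1.irrefl h
            · have hyS : y ∉ S := fun hyS =>
                hyws ((hmemws y).mpr ⟨hyb, hya, hyS⟩)
              have : G.Adj y b := (houtS y hyS b).mp h.symm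
              exact (hinv y hyS).1 b this hbS
        · intro hy
          rw [hy]
          exact ((h1loc a b hanws hbnws).mpr hab).symm
      -- invariant for the smaller set
      set S' : Finset (Fin n) := (S.erase a).erase b with hS'def
      have hS'sub : S' ⊂ S :=
        (Finset.erase_subset b (S.erase a)).trans_ssubset (Finset.erase_ssubset haS)
      have hmemS' : ∀ v, v ∈ S' ↔ (v ≠ b ∧ v ≠ a ∧ v ∈ S) := by
        intro v
        rw [hS'def, Finset.mem_erase, Finset.mem_erase]
      have hinv' : ∀ v, v ∉ S' →
          (∀ w, G1.Adj v w → w ∉ S') ∧ (∀ w x, G1.Adj v w → G1.Adj v x → w = x) := by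
        intro v hvS'
        by_cases hva : v = a
        · subst hva
          constructor
          · intro w hw
            rw [haAdj] at hw
            subst hw
            intro hbS'
            exact ((hmemS' w).mp hbS').1 rfl
          · intro w x hw hx
            rw [haAdj] at hw hx
            rw [hw, hx]
        · by_cases hvb : v = b
          · subst hvb
            constructor
            · intro w hw
              rw [hbAdj] at hw
              subst hw
              intro haS'
              exact ((hmemS' w).mp haS').2.1 rfl
            · intro w x hw hx
              rw [hbAdj] at hw hx
              rw [hw, hx]
          · have hvS : v ∉ S := fun h => hvS' ((hmemS' v).mpr ⟨hvb, hva, h⟩)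
            constructor
            · intro w hw
              rw [houtS v hvS] at hw
              have := (hinv v hvS).1 w hw
              intro hwS'
              exact this ((hmemS' w).mp hwS').2.2
            · intro w x hw hx
              rw [houtS v hvS] at hw hx
              exact (hinv v hvS).2 w x hw hx
      have hu1 : isIsolated G1 u := h1iso u hu
      obtain ⟨l2, hl2, hu2, hdeg2⟩ := IH S' hS'sub G1 hu1 hinv'
      refine ⟨l1 ++ l2, ?_, ?_, ?_⟩
      · intro p hp
        rcases List.mem_append.mp hp with h | h
        · exact hl1 p h
        · exact hl2 p h
      · rw [mfold_append, ← hG1def]; exact hu2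
      · rw [mfold_append, ← hG1def]; exact hdeg2
    · push_neg at hedge
      refine ⟨[], by simp, by simpa using hu, ?_⟩
      intro v w x hw hx
      simp only [mfold_nil] at hw hx
      by_cases hvS : v ∈ S
      · exact absurd hw (hedge v hvS w)
      · exact (hinv v hvS).2 w x hw hx

open scoped Classical in
/-- The matching partner function: for a non-isolated vertex, a chosen neighbour. -/
noncomputable def mfun (H : SimpleGraph (Fin n)) : Fin n → Fin n :=
  fun v => if h : ∃ w, H.Adj v w then h.choose else v

open scoped Classical in
/-- Vertices that are the smaller endpoint of their matching edge. -/
noncomputable def Rset (H : SimpleGraph (Fin n)) : Finset (Fin n) :=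
  univ.filter (fun v => (∃ w, H.Adj v w) ∧ v < mfun H v)

open scoped Classical in
/-- Vertices that are the larger endpoint of their matching edge. -/
noncomputable def R'set (H : SimpleGraph (Fin n)) : Finset (Fin n) :=
  univ.filter (fun v => (∃ w, H.Adj v w) ∧ mfun H v < v)

open scoped Classical in
/-- Isolated vertices. -/
noncomputable def Iset (H : SimpleGraph (Fin n)) : Finset (Fin n) :=
  univ.filter (fun v => ¬ ∃ w, H.Adj v w)

noncomputable def psiFun (H : SimpleGraph (Fin n)) :
    Fin (2 * (Rset H).card + (Iset H).card) → Fin n := fun x =>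
  if hx : (x : ℕ) < 2 * (Rset H).card then
    (if (x : ℕ) % 2 = 0 then
      ((Rset H).orderIsoOfFin rfl ⟨(x : ℕ) / 2, by omega⟩ : Fin n)
    else mfun H ((Rset H).orderIsoOfFin rfl ⟨(x : ℕ) / 2, by omega⟩))
  else ((Iset H).orderIsoOfFin rfl ⟨(x : ℕ) - 2 * (Rset H).card, by
    have := x.isLt; omega⟩ : Fin n)

lemma psiFun_even (H : SimpleGraph (Fin n)) (x : Fin (2 * (Rset H).card + (Iset H).card))
    (hx : (x : ℕ) < 2 * (Rset H).card) (he : (x : ℕ) % 2 = 0)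
    (h2 : (x : ℕ) / 2 < (Rset H).card) :
    psiFun H x = ((Rset H).orderIsoOfFin rfl ⟨(x : ℕ) / 2, h2⟩ : Fin n) := by
  simp [psiFun, hx, he]

lemma psiFun_odd (H : SimpleGraph (Fin n)) (x : Fin (2 * (Rset H).card + (Iset H).card))
    (hx : (x : ℕ) < 2 * (Rset H).card) (he : ¬ (x : ℕ) % 2 = 0)
    (h2 : (x : ℕ) / 2 < (Rset H).card) :
    psiFun H x = mfun H ((Rset H).orderIsoOfFin rfl ⟨(x : ℕ) / 2, h2⟩) := by
  simp [psiFun, hx, he]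

lemma psiFun_high (H : SimpleGraph (Fin n)) (x : Fin (2 * (Rset H).card + (Iset H).card))
    (hx : ¬ (x : ℕ) < 2 * (Rset H).card)
    (h2 : (x : ℕ) - 2 * (Rset H).card < (Iset H).card) :
    psiFun H x = ((Iset H).orderIsoOfFin rfl ⟨(x : ℕ) - 2 * (Rset H).card, h2⟩ : Fin n) := by
  simp [psiFun, hx]

lemma matching_iso (H : SimpleGraph (Fin n)) (u : Fin n) (hu : isIsolated H u)
    (hdeg : ∀ v w x, H.Adj v w → H.Adj v x → w = x) :
    ∃ α β : ℕ, 2 * α + β = n ∧ 0 < β ∧ Nonempty (H ≃g pairGraph α β) := by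
  classical
  have hfadj : ∀ v, (∃ w, H.Adj v w) → H.Adj v (mfun H v) := by
    intro v h
    rw [mfun, dif_pos h]
    exact h.choose_spec
  have hf : ∀ v w, H.Adj v w → mfun H v = w := fun v w h =>
    hdeg v (mfun H v) w (hfadj v ⟨w, h⟩) h
  have hff : ∀ v, (∃ w, H.Adj v w) → mfun H (mfun H v) = v := fun v h =>
    hf (mfun H v) v (hfadj v h).symm
  have hmemR : ∀ v, v ∈ Rset H ↔ (∃ w, H.Adj v w) ∧ v < mfun H v := by
    intro v; simp [Rset]
  have hmemR' : ∀ v, v ∈ R'set H ↔ (∃ w, H.Adj v w) ∧ mfun H v < v := by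
    intro v; simp [R'set]
  have hmemI : ∀ v, v ∈ Iset H ↔ ¬ ∃ w, H.Adj v w := by
    intro v; simp [Iset]
  have hRadj : ∀ v, v ∈ Rset H → H.Adj v (mfun H v) := fun v hv =>
    hfadj v ((hmemR v).mp hv).1
  have hR'adj : ∀ v, v ∈ R'set H → H.Adj v (mfun H v) := fun v hv =>
    hfadj v ((hmemR' v).mp hv).1
  have hfR' : ∀ v, v ∈ Rset H → mfun H v ∈ R'set H := by
    intro v hv
    rcases (hmemR v).mp hv with ⟨hex, hlt⟩
    refine (hmemR' (mfun H v)).mpr ⟨⟨v, (hfadj v hex).symm⟩, ?_⟩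
    rw [hff v hex]
    exact hlt
  have hfR : ∀ v, v ∈ R'set H → mfun H v ∈ Rset H := by
    intro v hv
    rcases (hmemR' v).mp hv with ⟨hex, hlt⟩
    refine (hmemR (mfun H v)).mpr ⟨⟨v, (hfadj v hex).symm⟩, ?_⟩
    rw [hff v hex]
    exact hlt
  have hRR' : ∀ v, v ∈ Rset H → v ∈ R'set H → False := by
    intro v h1 h2
    have := ((hmemR v).mp h1).2
    have := ((hmemR' v).mp h2).2
    omega
  have hRI : ∀ v, v ∈ Rset H → v ∈ Iset H → False := fun v h1 h2 =>
    ((hmemI v).mp h2) ((hmemR v).mp h1).1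
  have hR'I : ∀ v, v ∈ R'set H → v ∈ Iset H → False := fun v h1 h2 =>
    ((hmemI v).mp h2) ((hmemR' v).mp h1).1
  -- cardinalities
  have hRR'card : (Rset H).card = (R'set H).card := by
    refine Finset.card_bij (fun v _ => mfun H v) (fun v hv => hfR' v hv) ?_ ?_
    · intro v hv v' hv' hvv'
      have h1 := hff v ((hmemR v).mp hv).1
      have h2 := hff v' ((hmemR v').mp hv').1
      rw [← h1, ← h2, hvv']
    · intro w hw
      refine ⟨mfun H w, hfR w hw, ?_⟩
      exact hff w ((hmemR' w).mp hw).1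
  have hunion : Rset H ∪ R'set H ∪ Iset H = univ := by
    ext v
    simp only [Finset.mem_union, Finset.mem_univ, iff_true]
    by_cases h : ∃ w, H.Adj v w
    · have hadj := hfadj v h
      have hne : v ≠ mfun H v := hadj.ne
      rcases lt_or_gt_of_ne hne with hlt | hgt
      · exact Or.inl (Or.inl ((hmemR v).mpr ⟨h, hlt⟩))
      · exact Or.inl (Or.inr ((hmemR' v).mpr ⟨h, hgt⟩))
    · exact Or.inr ((hmemI v).mpr h)
  have hd1 : Disjoint (Rset H) (R'set H) := by
    rw [Finset.disjoint_left]
    intro v h1 h2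
    exact hRR' v h1 h2
  have hd2 : Disjoint (Rset H ∪ R'set H) (Iset H) := by
    rw [Finset.disjoint_left]
    intro v h1 h2
    rcases Finset.mem_union.mp h1 with h | h
    · exact hRI v h h2
    · exact hR'I v h h2
  have hcards : 2 * (Rset H).card + (Iset H).card = n := by
    have h1 := Finset.card_union_of_disjoint hd2
    have h2 := Finset.card_union_of_disjoint hd1
    rw [hunion] at h1
    simp only [Finset.card_univ, Fintype.card_fin] at h1
    omega
  have hbpos : 0 < (Iset H).card := by
    refine Finset.card_pos.mpr ⟨u, (hmemI u).mpr ?_⟩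
    rintro ⟨w, hw⟩
    exact hu w hw
  -- injectivity of psiFun
  have hcoeR : ∀ (i j : Fin (Rset H).card),
      ((Rset H).orderIsoOfFin rfl i : Fin n) = ((Rset H).orderIsoOfFin rfl j : Fin n) →
        i = j := fun i j h =>
    ((Rset H).orderIsoOfFin rfl).injective (Subtype.coe_injective h)
  have hmemRi : ∀ (i : Fin (Rset H).card),
      ((Rset H).orderIsoOfFin rfl i : Fin n) ∈ Rset H := fun i =>
    ((Rset H).orderIsoOfFin rfl i).2
  have hmemIi : ∀ (i : Fin (Iset H).card),
      ((Iset H).orderIsoOfFin rfl i : Fin n) ∈ Iset H := fun i =>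
    ((Iset H).orderIsoOfFin rfl i).2
  have hinj : Function.Injective (psiFun H) := by
    intro x y hxy
    by_cases hx : (x : ℕ) < 2 * (Rset H).card <;>
      by_cases hy : (y : ℕ) < 2 * (Rset H).card
    · have hx2 : (x : ℕ) / 2 < (Rset H).card := by omega
      have hy2 : (y : ℕ) / 2 < (Rset H).card := by omega
      by_cases hxe : (x : ℕ) % 2 = 0 <;> by_cases hye : (y : ℕ) % 2 = 0
      · rw [psiFun_even H x hx hxe hx2, psiFun_even H y hy hye hy2] at hxy
        have := hcoeR _ _ hxy
        have : (x : ℕ) / 2 = (y : ℕ) / 2 := congrArg Fin.val this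
        exact Fin.ext (by omega)
      · rw [psiFun_even H x hx hxe hx2, psiFun_odd H y hy hye hy2] at hxy
        exact absurd (hfR' _ (hmemRi ⟨(y : ℕ) / 2, hy2⟩))
          (fun h => hRR' _ (hxy ▸ hmemRi ⟨(x : ℕ) / 2, hx2⟩) h)
      · rw [psiFun_odd H x hx hxe hx2, psiFun_even H y hy hye hy2] at hxy
        exact absurd (hfR' _ (hmemRi ⟨(x : ℕ) / 2, hx2⟩))
          (fun h => hRR' _ (hxy ▸ hmemRi ⟨(y : ℕ) / 2, hy2⟩) h)
      · rw [psiFun_odd H x hx hxe hx2, psiFun_odd H y hy hye hy2] at hxy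
        have hex : ∃ w, H.Adj (((Rset H).orderIsoOfFin rfl ⟨(x : ℕ) / 2, hx2⟩ : Fin n)) w :=
          ((hmemR _).mp (hmemRi ⟨(x : ℕ) / 2, hx2⟩)).1
        have hey : ∃ w, H.Adj (((Rset H).orderIsoOfFin rfl ⟨(y : ℕ) / 2, hy2⟩ : Fin n)) w :=
          ((hmemR _).mp (hmemRi ⟨(y : ℕ) / 2, hy2⟩)).1
        have : ((Rset H).orderIsoOfFin rfl ⟨(x : ℕ) / 2, hx2⟩ : Fin n) =
            ((Rset H).orderIsoOfFin rfl ⟨(y : ℕ) / 2, hy2⟩ : Fin n) := by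
          rw [← hff _ hex, ← hff _ hey, hxy]
        have := hcoeR _ _ this
        have : (x : ℕ) / 2 = (y : ℕ) / 2 := congrArg Fin.val this
        exact Fin.ext (by omega)
    · have hx2 : (x : ℕ) / 2 < (Rset H).card := by omega
      have hy2 : (y : ℕ) - 2 * (Rset H).card < (Iset H).card := by
        have := y.isLt; omega
      rw [psiFun_high H y hy hy2] at hxy
      by_cases hxe : (x : ℕ) % 2 = 0
      · rw [psiFun_even H x hx hxe hx2] at hxy
        exact absurd (hxy ▸ hmemRi ⟨(x : ℕ) / 2, hx2⟩)
          (fun h => hRI _ h (hmemIi _))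
      · rw [psiFun_odd H x hx hxe hx2] at hxy
        exact absurd (hxy ▸ hfR' _ (hmemRi ⟨(x : ℕ) / 2, hx2⟩))
          (fun h => hR'I _ h (hmemIi _))
    · have hy2 : (y : ℕ) / 2 < (Rset H).card := by omega
      have hx2 : (x : ℕ) - 2 * (Rset H).card < (Iset H).card := by
        have := x.isLt; omega
      rw [psiFun_high H x hx hx2] at hxy
      by_cases hye : (y : ℕ) % 2 = 0
      · rw [psiFun_even H y hy hye hy2] at hxy
        exact absurd (hxy ▸ hmemRi ⟨(y : ℕ) / 2, hy2⟩)
          (fun h => hRI _ h (hmemIi _))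
      · rw [psiFun_odd H y hy hye hy2] at hxy
        exact absurd (hxy ▸ hfR' _ (hmemRi ⟨(y : ℕ) / 2, hy2⟩))
          (fun h => hR'I _ h (hmemIi _))
    · have hx2 : (x : ℕ) - 2 * (Rset H).card < (Iset H).card := by
        have := x.isLt; omega
      have hy2 : (y : ℕ) - 2 * (Rset H).card < (Iset H).card := by
        have := y.isLt; omega
      rw [psiFun_high H x hx hx2, psiFun_high H y hy hy2] at hxy
      have := ((Iset H).orderIsoOfFin rfl).injective (Subtype.coe_injective hxy)
      have : (x : ℕ) - 2 * (Rset H).card = (y : ℕ) - 2 * (Rset H).card :=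
        congrArg Fin.val this
      exact Fin.ext (by omega)
  -- adjacency transfer
  have key : ∀ x y, H.Adj (psiFun H x) (psiFun H y) ↔
      (pairGraph (Rset H).card (Iset H).card).Adj x y := by
    intro x y
    have hIiso : ∀ v, v ∈ Iset H → ∀ w, ¬ H.Adj v w := by
      intro v hv w hw
      exact ((hmemI v).mp hv) ⟨w, hw⟩
    constructor
    · intro hadj
      have hx : (x : ℕ) < 2 * (Rset H).card := by
        by_contra hx
        have hx2 : (x : ℕ) - 2 * (Rset H).card < (Iset H).card := by
          have := x.isLt; omega
        rw [psiFun_high H x hx hx2] at hadj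
        exact hIiso _ (hmemIi _) _ hadj
      have hy : (y : ℕ) < 2 * (Rset H).card := by
        by_contra hy
        have hy2 : (y : ℕ) - 2 * (Rset H).card < (Iset H).card := by
          have := y.isLt; omega
        rw [psiFun_high H y hy hy2] at hadj
        exact hIiso _ (hmemIi _) _ hadj.symm
      have hx2 : (x : ℕ) / 2 < (Rset H).card := by omega
      have hy2 : (y : ℕ) / 2 < (Rset H).card := by omega
      set rx : Fin n := ((Rset H).orderIsoOfFin rfl ⟨(x : ℕ) / 2, hx2⟩ : Fin n) with hrx
      set ry : Fin n := ((Rset H).orderIsoOfFin rfl ⟨(y : ℕ) / 2, hy2⟩ : Fin n) with hry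
      have hexx : ∃ w, H.Adj rx w := ((hmemR rx).mp (hmemRi _)).1
      have hexy : ∃ w, H.Adj ry w := ((hmemR ry).mp (hmemRi _)).1
      have hdiv : (x : ℕ) / 2 = (y : ℕ) / 2 ∧ (x : ℕ) % 2 ≠ (y : ℕ) % 2 := by
        by_cases hxe : (x : ℕ) % 2 = 0 <;> by_cases hye : (y : ℕ) % 2 = 0
        · rw [psiFun_even H x hx hxe hx2, psiFun_even H y hy hye hy2] at hadj
          exact absurd (hf _ _ hadj ▸ hfR' rx (hmemRi _))
            (fun h => hRR' _ (hmemRi ⟨(y : ℕ) / 2, hy2⟩) h)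
        · rw [psiFun_even H x hx hxe hx2, psiFun_odd H y hy hye hy2] at hadj
          have h1 : mfun H rx = mfun H ry := hf _ _ hadj
          have h2 : rx = ry := by rw [← hff rx hexx, ← hff ry hexy, h1]
          have := congrArg Fin.val (hcoeR _ _ h2)
          exact ⟨this, by omega⟩
        · rw [psiFun_odd H x hx hxe hx2, psiFun_even H y hy hye hy2] at hadj
          have h1 : mfun H (mfun H rx) = ry := hf _ _ hadj
          have h2 : rx = ry := by rw [← h1, hff rx hexx]
          have := congrArg Fin.val (hcoeR _ _ h2)
          exact ⟨this, by omega⟩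
        · rw [psiFun_odd H x hx hxe hx2, psiFun_odd H y hy hye hy2] at hadj
          have h1 : mfun H (mfun H rx) = mfun H ry := hf _ _ hadj
          rw [hff rx hexx] at h1
          exact absurd (h1 ▸ hfR' ry (hmemRi _))
            (fun h => hRR' rx (hmemRi _) h)
      refine ⟨?_, hdiv.1, hx⟩
      intro hxyeq
      exact hdiv.2 (by rw [hxyeq])
    · rintro ⟨hne, hdiv, hx⟩
      have hne' : (x : ℕ) ≠ (y : ℕ) := fun h => hne (Fin.ext h)
      have hy : (y : ℕ) < 2 * (Rset H).card := by omega
      have hx2 : (x : ℕ) / 2 < (Rset H).card := by omega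
      have hy2 : (y : ℕ) / 2 < (Rset H).card := by omega
      have hij : (⟨(x : ℕ) / 2, hx2⟩ : Fin (Rset H).card) = ⟨(y : ℕ) / 2, hy2⟩ :=
        Fin.ext hdiv
      by_cases hxe : (x : ℕ) % 2 = 0
      · have hye : ¬ (y : ℕ) % 2 = 0 := by omega
        rw [psiFun_even H x hx hxe hx2, psiFun_odd H y hy hye hy2, ← hij]
        exact hRadj _ (hmemRi _)
      · have hye : (y : ℕ) % 2 = 0 := by omega
        rw [psiFun_odd H x hx hxe hx2, psiFun_even H y hy hye hy2, ← hij]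
        exact (hRadj _ (hmemRi _)).symm
  have hbij : Function.Bijective (psiFun H) :=
    (Fintype.bijective_iff_injective_and_card (psiFun H)).mpr
      ⟨hinj, by simp [hcards]⟩
  refine ⟨(Rset H).card, (Iset H).card, hcards, hbpos, ?_⟩
  exact ⟨(SimpleGraph.Iso.symm ⟨Equiv.ofBijective (psiFun H) hbij, fun {a b} => key a b⟩)⟩

end Aux

/-- A graph on `n` vertices with at least one isolated vertex can be
transformed, by a finite sequence of relative mutations, into a graph isomorphic to
`G(α, β)` with `2α + β = n` and `β > 0`. -/
theorem stmt_2 {n : ℕ} (G : SimpleGraph (Fin n)) (hiso : ∃ u, isIsolated G u) :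
    ∃ α β : ℕ, 2 * α + β = n ∧ 0 < β ∧
      ∃ l : List (Fin n × Fin n), (∀ p ∈ l, p.1 ≠ p.2) ∧
        Nonempty ((l.foldl (fun H p => relMutation H p.1 p.2) G) ≃g pairGraph α β) := by
  classical
  obtain ⟨u, hu⟩ := hiso
  obtain ⟨l, hl, hu', hdeg⟩ := clearAll u Finset.univ G hu
    (fun v hv => absurd (Finset.mem_univ v) hv)
  obtain ⟨α, β, h1, h2, h3⟩ := matching_iso (mfold l G) u hu' hdeg
  exact ⟨α, β, h1, h2, l, hl, h3⟩
end

section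
/- Let G be a finite simple graph on the vertex set {1,…,n} and let i ∈ {1,…,n}. Then the identity (I + E_{i,n+1}) · X(G) · (I + E_{n+1,i}) = X(μ_i(G)) holds for matrices over F_2, where I is the (n+1)×(n+1) identity matrix and E_{a,b} is the (n+1)×(n+1) matrix unit with entry 1 in position (a,b) and 0 elsewhere. -/
open Classical Finset

/-- `(I + E_{i,n+1}) ⬝ X(G) ⬝ (I + E_{n+1,i}) = X(μ_i(G))` over `F_2`. -/
theorem stmt_4 {n : ℕ} (G : SimpleGraph (Fin n)) (i : Fin n) :
    (1 + Matrix.single i.castSucc (Fin.last n) (1 : ZMod 2)) * Xmat G *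
      (1 + Matrix.single (Fin.last n) i.castSucc (1 : ZMod 2)) =
    Xmat (mutation G i) := by
  have key : ∀ x y : Fin n, adjMat (mutation G i) x y =
      adjMat G x y + (if x = i then 1 else 0) + (if y = i then 1 else 0) := by
    intro x y
    simp only [adjMat]
    rcases eq_or_ne x i with h1 | h1 <;> rcases eq_or_ne y i with h2 | h2
    · rw [h1, h2]
      simp [(mutation G i).irrefl, G.irrefl]
      decide
    · rw [h1]
      have hadj : (mutation G i).Adj i y ↔ ¬ G.Adj i y := by
        simp [mutation, h2, Ne.symm h2]
      by_cases hG : G.Adj i y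
      · simp [hadj, hG, h2]; decide
      · simp [hadj, hG, h2]
    · rw [h2]
      have hadj : (mutation G i).Adj x i ↔ ¬ G.Adj x i := by
        constructor
        · rintro ⟨hne, ⟨h, -⟩ | ⟨-, h⟩ | ⟨-, h, -⟩⟩
          · exact absurd h h1
          · exact fun hc => h hc.symm
          · exact absurd rfl h
        · intro h
          exact ⟨h1, Or.inr (Or.inl ⟨rfl, fun hc => h hc.symm⟩)⟩
      by_cases hG : G.Adj x i
      · simp [hadj, hG, h1]; decide
      · simp [hadj, hG, h1]
    · have hadj : (mutation G i).Adj x y ↔ G.Adj x y := by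
        constructor
        · rintro ⟨-, ⟨h, -⟩ | ⟨h, -⟩ | ⟨-, -, h⟩⟩
          · exact absurd h h1
          · exact absurd h h2
          · exact h
        · intro h; exact ⟨h.ne, Or.inr (Or.inr ⟨h1, h2, h⟩)⟩
      simp [hadj, h1, h2]
  ext a b
  simp only [Matrix.add_mul, Matrix.mul_add, Matrix.one_mul, Matrix.mul_one, Matrix.add_apply]
  have hic : ((i.castSucc : Fin (n+1)) : ℕ) = (i : ℕ) := rfl
  have e1 : (Matrix.single i.castSucc (Fin.last n) (1 : ZMod 2) * Xmat G) a b
      = if a = i.castSucc then Xmat G (Fin.last n) b else 0 := by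
    by_cases ha : a = i.castSucc
    · subst ha; simp
    · simp [Matrix.single_mul_apply_of_ne, ha]
  have e2 : (Xmat G * Matrix.single (Fin.last n) i.castSucc (1 : ZMod 2)) a b
      = if b = i.castSucc then Xmat G a (Fin.last n) else 0 := by
    by_cases hb : b = i.castSucc
    · subst hb; simp
    · simp [Matrix.mul_single_apply_of_ne, hb]
  have e3 : (Matrix.single i.castSucc (Fin.last n) (1 : ZMod 2) * Xmat G *
      Matrix.single (Fin.last n) i.castSucc (1 : ZMod 2)) a b
      = if a = i.castSucc ∧ b = i.castSucc then Xmat G (Fin.last n) (Fin.last n) else 0 := by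
    by_cases hb : b = i.castSucc
    · subst hb
      rw [Matrix.mul_single_apply_same]
      by_cases ha : a = i.castSucc
      · subst ha; simp
      · rw [Matrix.single_mul_apply_of_ne (h := ha)]
        simp [ha]
    · simp [hb]
  rw [e1, e2, e3]
  have hXll : Xmat G (Fin.last n) (Fin.last n) = 0 := by simp [Xmat]
  by_cases ha : (a : ℕ) < n <;> by_cases hb : (b : ℕ) < n
  · have hXlb : Xmat G (Fin.last n) b = 1 := by simp [Xmat, hb]
    have hXal : Xmat G a (Fin.last n) = 1 := by simp [Xmat, ha]
    have hXab : Xmat G a b = adjMat G ⟨a, ha⟩ ⟨b, hb⟩ := by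
      simp only [Xmat]; rw [dif_pos ha, dif_pos hb]
    have hXab' : Xmat (mutation G i) a b = adjMat (mutation G i) ⟨a, ha⟩ ⟨b, hb⟩ := by
      simp only [Xmat]; rw [dif_pos ha, dif_pos hb]
    have haeq : (a = i.castSucc) ↔ ((⟨a, ha⟩ : Fin n) = i) := by
      constructor
      · intro h; exact Fin.ext (by rw [← hic, ← h])
      · intro h; exact Fin.ext (by rw [hic, ← h])
    have hbeq : (b = i.castSucc) ↔ ((⟨b, hb⟩ : Fin n) = i) := by
      constructor
      · intro h; exact Fin.ext (by rw [← hic, ← h])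
      · intro h; exact Fin.ext (by rw [hic, ← h])
    rw [hXll, hXlb, hXal, hXab, hXab', key]
    simp only [haeq, hbeq]
    simp
  · have hbne : b ≠ i.castSucc := by
      intro h; rw [h, hic] at hb; exact hb i.isLt
    have hXab : Xmat G a b = 1 := by simp [Xmat, ha, hb]
    have hXab' : Xmat (mutation G i) a b = 1 := by simp [Xmat, ha, hb]
    have hXal : Xmat G a (Fin.last n) = 1 := by simp [Xmat, ha]
    have hXlb : Xmat G (Fin.last n) b = 0 := by simp [Xmat, hb]
    rw [hXll, hXab, hXab', hXlb]
    simp [hbne]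
  · have hane : a ≠ i.castSucc := by
      intro h; rw [h, hic] at ha; exact ha i.isLt
    have hXab : Xmat G a b = 1 := by simp [Xmat, ha, hb]
    have hXab' : Xmat (mutation G i) a b = 1 := by simp [Xmat, ha, hb]
    have hXal : Xmat G a (Fin.last n) = 0 := by simp [Xmat, ha]
    rw [hXll, hXab, hXab', hXal]
    simp [hane]
  · have hane : a ≠ i.castSucc := by
      intro h; rw [h, hic] at ha; exact ha i.isLt
    have hXab : Xmat G a b = 0 := by simp [Xmat, ha, hb]
    have hXab' : Xmat (mutation G i) a b = 0 := by simp [Xmat, ha, hb]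
    have hXal : Xmat G a (Fin.last n) = 0 := by simp [Xmat, ha]
    rw [hXll, hXab, hXab', hXal]
    simp [hane]
end

section
/- Let G be a finite simple graph on the vertex set {1,…,n}, let p be an isolated vertex of G, and let i, j be vertices such that i, j, p are pairwise distinct. Then the identity (I + E_{i,j} + E_{i,p}) · X(G) · (I + E_{j,i} + E_{p,i}) = X(μ_{i←j}(G)) holds for matrices over F_2, where I is the (n+1)×(n+1) identity matrix and E_{a,b} is the (n+1)×(n+1) matrix unit with entry 1 in position (a,b) and 0 elsewhere. -/
open Classical Finset

lemma mulL {N : ℕ} (i j a b : Fin N) (M : Matrix (Fin N) (Fin N) (ZMod 2)) :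
    (Matrix.single i j (1 : ZMod 2) * M) a b = if a = i then M j b else 0 := by
  rcases eq_or_ne a i with rfl | h
  · simp
  · simp [h, Matrix.single_mul_apply_of_ne (c := (1 : ZMod 2)) i j a b h M]

lemma mulR {N : ℕ} (i j a b : Fin N) (M : Matrix (Fin N) (Fin N) (ZMod 2)) :
    (M * Matrix.single j i (1 : ZMod 2)) a b = if b = i then M a j else 0 := by
  rcases eq_or_ne b i with rfl | h
  · simp
  · simp [h, Matrix.mul_single_apply_of_ne (c := (1 : ZMod 2)) j i a b h M]

lemma relMutation_adj {V : Type*} (G : SimpleGraph V) (v u x y : V) :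
    (relMutation G v u).Adj x y ↔ (x ≠ y ∧
    ((x = v ∧ (G.Adj u y ↔ ¬ G.Adj v y)) ∨ (y = v ∧ (G.Adj u x ↔ ¬ G.Adj v x)) ∨
      (x ≠ v ∧ y ≠ v ∧ G.Adj x y))) := Iff.rfl

lemma Xmat_cc {n : ℕ} (G : SimpleGraph (Fin n)) (x y : Fin n) :
    Xmat G x.castSucc y.castSucc = if G.Adj x y then 1 else 0 := by
  simp [Xmat, adjMat, x.isLt, y.isLt]

lemma Xmat_cl {n : ℕ} (G : SimpleGraph (Fin n)) (x : Fin n) :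
    Xmat G x.castSucc (Fin.last n) = 1 := by
  simp [Xmat, x.isLt]

lemma Xmat_lc {n : ℕ} (G : SimpleGraph (Fin n)) (y : Fin n) :
    Xmat G (Fin.last n) y.castSucc = 1 := by
  simp [Xmat, y.isLt]

lemma Xmat_ll {n : ℕ} (G : SimpleGraph (Fin n)) :
    Xmat G (Fin.last n) (Fin.last n) = 0 := by
  simp [Xmat]

/-- if `p` is an isolated vertex of `G` and `i, j, p` are pairwise
distinct, then `(I + E_{i,j} + E_{i,p}) ⬝ X(G) ⬝ (I + E_{j,i} + E_{p,i}) = X(μ_{i←j}(G))`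
over `F_2`. -/
theorem stmt_5 {n : ℕ} (G : SimpleGraph (Fin n)) (p i j : Fin n)
    (hp : isIsolated G p) (hij : i ≠ j) (hip : i ≠ p) (hjp : j ≠ p) :
    (1 + Matrix.single i.castSucc j.castSucc (1 : ZMod 2) +
        Matrix.single i.castSucc p.castSucc (1 : ZMod 2)) * Xmat G *
      (1 + Matrix.single j.castSucc i.castSucc (1 : ZMod 2) +
        Matrix.single p.castSucc i.castSucc (1 : ZMod 2)) =
    Xmat (relMutation G i j) := by
  have hpw : ∀ w, ¬ G.Adj p w := hp
  have hp' : ∀ w, ¬ G.Adj w p := fun w h => hpw w h.symm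
  have hli : ∀ x : Fin n, Fin.last n ≠ x.castSucc := fun x => (Fin.castSucc_lt_last x).ne'
  ext a b
  simp only [Matrix.add_mul, Matrix.mul_add, Matrix.one_mul, Matrix.mul_one,
    Matrix.add_apply, mulL, mulR]
  induction a using Fin.lastCases with
  | last =>
    induction b using Fin.lastCases with
    | last => simp [hli, Xmat_ll]
    | cast y =>
      by_cases hy : y = i
      · simp [hli, Fin.castSucc_inj, hy, Xmat_lc, Xmat_ll]
        decide
      · simp [hli, Xmat_lc, Fin.castSucc_inj, hy]
  | cast x =>
    induction b using Fin.lastCases with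
    | last =>
      by_cases hx : x = i
      · simp only [Fin.castSucc_inj, hx, if_pos rfl, if_neg (hli i), Xmat_cl]
        decide
      · simp [hli, Xmat_cl, Fin.castSucc_inj, hx]
    | cast y =>
      simp only [Fin.castSucc_inj, Xmat_cc, relMutation_adj]
      by_cases hx : x = i <;> by_cases hy : y = i
      · -- x = i, y = i
        rw [if_neg (by simp [hx, hy])]
        simp only [hx, hy, if_pos rfl]
        simp [hpw, hp', G.adj_comm j i]
        first
        | rfl
        | (by_cases h : G.Adj i j <;> simp [h] <;> decide)
      · -- x = i, y ≠ i
        have hiy : i ≠ y := fun h => hy h.symm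
        simp only [hx, hy, if_pos rfl, if_neg hy]
        simp [hpw, hp', hiy, hy]
        by_cases h1 : G.Adj i y <;> by_cases h2 : G.Adj j y <;>
          simp [h1, h2] <;> decide
      · -- x ≠ i, y = i
        have hxi : x ≠ i := hx
        simp only [hx, hy, if_pos rfl, if_neg hx]
        simp [hpw, hp', hxi, hx, G.adj_comm j x, G.adj_comm i x]
        by_cases h1 : G.Adj x i <;> by_cases h2 : G.Adj x j <;>
          simp [h1, h2] <;> decide
      · -- x ≠ i, y ≠ i
        by_cases h : G.Adj x y
        · simp [hx, hy, h, h.ne]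
        · simp [hx, hy, h]
end

section
/- Let G be a finite simple graph on the vertex set {1,…,n}. For every vertex v, the rank over F_2 of X(μ_v(G)) equals the rank over F_2 of X(G). -/
open Classical Finset

open Matrix

section Aux

variable {n : ℕ} (G : SimpleGraph (Fin n)) (v : Fin n)

private lemma flip_indicator (A : Prop) :
    (if ¬ A then (1 : ZMod 2) else 0) = (if A then 1 else 0) + 1 := by
  by_cases h : A <;> simp [h] <;> decide

private lemma mut_adj_v (j : Fin n) (hj : j ≠ v) :
    (mutation G v).Adj v j ↔ ¬ G.Adj v j := by
  constructor
  · rintro ⟨hne, h | h | ⟨h1, -⟩⟩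
    · exact h.2
    · exact absurd h.1 hj
    · exact absurd rfl h1
  · exact fun h => ⟨hj.symm.symm ∘ Eq.symm, Or.inl ⟨rfl, h⟩⟩

private lemma mut_adj_other (i j : Fin n) (hi : i ≠ v) (hj : j ≠ v) :
    (mutation G v).Adj i j ↔ G.Adj i j := by
  constructor
  · rintro ⟨hne, h | h | ⟨-, -, h⟩⟩
    · exact absurd h.1 hi
    · exact absurd h.1 hj
    · exact h
  · exact fun h => ⟨G.ne_of_adj h, Or.inr (Or.inr ⟨hi, hj, h⟩)⟩

private lemma key_entry (M : Matrix (Fin (n+1)) (Fin (n+1)) (ZMod 2)) (i j : Fin (n+1)) :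
    (((1 + Matrix.single (Fin.castSucc v) (Fin.last n) 1) * M *
      (1 + Matrix.single (Fin.last n) (Fin.castSucc v) 1) :
      Matrix (Fin (n+1)) (Fin (n+1)) (ZMod 2))) i j =
    M i j + (if i = Fin.castSucc v then M (Fin.last n) j else 0) +
      (if j = Fin.castSucc v then M i (Fin.last n) else 0) +
      (if i = Fin.castSucc v ∧ j = Fin.castSucc v then M (Fin.last n) (Fin.last n) else 0) := by
  have h1 : ∀ (N : Matrix (Fin (n+1)) (Fin (n+1)) (ZMod 2)) a b,
      (((1 + Matrix.single (Fin.castSucc v) (Fin.last n) 1) * N :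
        Matrix (Fin (n+1)) (Fin (n+1)) (ZMod 2))) a b =
      N a b + (if a = Fin.castSucc v then N (Fin.last n) b else 0) := by
    intro N a b
    rw [Matrix.add_mul, Matrix.one_mul, Matrix.add_apply]
    congr 1
    split_ifs with h
    · subst h; rw [Matrix.single_mul_apply_same, one_mul]
    · rw [Matrix.single_mul_apply_of_ne (h := h)]
  have h2 : ∀ (N : Matrix (Fin (n+1)) (Fin (n+1)) (ZMod 2)) a b,
      ((N * (1 + Matrix.single (Fin.last n) (Fin.castSucc v) 1) :
        Matrix (Fin (n+1)) (Fin (n+1)) (ZMod 2))) a b =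
      N a b + (if b = Fin.castSucc v then N a (Fin.last n) else 0) := by
    intro N a b
    rw [Matrix.mul_add, Matrix.mul_one, Matrix.add_apply]
    congr 1
    split_ifs with h
    · subst h; rw [Matrix.mul_single_apply_same, mul_one]
    · rw [Matrix.mul_single_apply_of_ne (hbj := h)]
  rw [h2, h1, h1]
  by_cases hi : i = Fin.castSucc v <;> by_cases hj : j = Fin.castSucc v <;>
    simp [hi, hj] <;> ring

private lemma Xmut_eq :
    Xmat (mutation G v) = ((1 + Matrix.single (Fin.castSucc v) (Fin.last n) 1) * Xmat G *
      (1 + Matrix.single (Fin.last n) (Fin.castSucc v) 1) :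
      Matrix (Fin (n+1)) (Fin (n+1)) (ZMod 2)) := by
  ext i j
  rw [key_entry]
  have hvlt : ((Fin.castSucc v : Fin (n+1)) : ℕ) < n := v.isLt
  have hlast : ¬ ((Fin.last n : Fin (n+1)) : ℕ) < n := by simp
  by_cases hi : i = Fin.castSucc v <;> by_cases hj : j = Fin.castSucc v
  · subst hi; subst hj
    simp only [if_pos rfl, and_self, Xmat]
    rw [dif_pos hvlt, dif_pos hvlt, dif_neg hlast, dif_neg hlast, if_pos hvlt, if_neg hlast]
    have hv : (⟨((Fin.castSucc v : Fin (n+1)) : ℕ), hvlt⟩ : Fin n) = v := by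
      apply Fin.ext; simp
    rw [hv]
    simp [adjMat]
    decide
  · subst hi
    simp only [if_pos rfl, if_neg hj, hj, and_false, if_false, add_zero, Xmat]
    have hv : (⟨((Fin.castSucc v : Fin (n+1)) : ℕ), hvlt⟩ : Fin n) = v := by
      apply Fin.ext; simp
    by_cases hjn : (j : ℕ) < n
    · rw [dif_pos hvlt, dif_pos hjn, dif_pos hvlt, dif_pos hjn, dif_neg hlast, if_pos hjn, hv]
      have hjv : (⟨(j : ℕ), hjn⟩ : Fin n) ≠ v := by
        intro h
        apply hj
        apply Fin.ext
        have := congrArg (Fin.val) h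
        simpa using this
      simp only [adjMat]
      rw [if_congr (mut_adj_v G v _ hjv) rfl rfl, flip_indicator]
      simp
    · simp [hvlt, hjn, hlast]
  · subst hj
    simp only [if_pos rfl, if_neg hi, hi, false_and, if_false, add_zero, zero_add, Xmat]
    have hv : (⟨((Fin.castSucc v : Fin (n+1)) : ℕ), hvlt⟩ : Fin n) = v := by
      apply Fin.ext; simp
    by_cases hin : (i : ℕ) < n
    · rw [dif_pos hin, dif_pos hvlt, dif_pos hin, dif_pos hvlt, dif_pos hin, dif_neg hlast, hv]
      have hiv : (⟨(i : ℕ), hin⟩ : Fin n) ≠ v := by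
        intro h
        apply hi
        apply Fin.ext
        have := congrArg (Fin.val) h
        simpa using this
      simp only [adjMat]
      have hadj : (mutation G v).Adj ⟨(i:ℕ), hin⟩ v ↔ ¬ G.Adj v ⟨(i:ℕ), hin⟩ := by
        rw [SimpleGraph.adj_comm]
        exact mut_adj_v G v _ hiv
      rw [if_congr hadj rfl rfl]
      rw [show (if G.Adj ⟨(i:ℕ), hin⟩ v then (1:ZMod 2) else 0) =
        (if G.Adj v ⟨(i:ℕ), hin⟩ then 1 else 0) by rw [SimpleGraph.adj_comm]]
      rw [flip_indicator]
      simp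
    · simp [hin, hvlt, hlast]
  · simp only [if_neg hi, if_neg hj, hi, false_and, if_false, add_zero, Xmat]
    by_cases hin : (i : ℕ) < n <;> by_cases hjn : (j : ℕ) < n
    · rw [dif_pos hin, dif_pos hjn, dif_pos hin, dif_pos hjn]
      have hiv : (⟨(i : ℕ), hin⟩ : Fin n) ≠ v := by
        intro h; apply hi; apply Fin.ext
        have := congrArg (Fin.val) h; simpa using this
      have hjv : (⟨(j : ℕ), hjn⟩ : Fin n) ≠ v := by
        intro h; apply hj; apply Fin.ext
        have := congrArg (Fin.val) h; simpa using this
      simp only [adjMat]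
      rw [if_congr (mut_adj_other G v _ _ hiv hjv) rfl rfl]
    · simp [hin, hjn]
    · simp [hin, hjn]
    · simp [hin, hjn]

end Aux

/-- mutation preserves the rank of `X(G)` over `F_2`. -/
theorem stmt_6 {n : ℕ} (G : SimpleGraph (Fin n)) (v : Fin n) :
    (Xmat (mutation G v)).rank = (Xmat G).rank := by
  classical
  set E : Matrix (Fin (n+1)) (Fin (n+1)) (ZMod 2) :=
    Matrix.single (Fin.castSucc v) (Fin.last n) 1 with hE
  set F : Matrix (Fin (n+1)) (Fin (n+1)) (ZMod 2) :=
    Matrix.single (Fin.last n) (Fin.castSucc v) 1 with hF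
  have hselfE : E + E = 0 := by
    ext i j; simp [Matrix.add_apply, CharTwo.add_self_eq_zero]
  have hselfF : F + F = 0 := by
    ext i j; simp [Matrix.add_apply, CharTwo.add_self_eq_zero]
  have hneE : Fin.last n ≠ Fin.castSucc v := (Fin.castSucc_lt_last v).ne'
  have hPP : (1 + E) * (1 + E) = 1 := by
    rw [add_mul, one_mul, mul_add, mul_one, hE, Matrix.single_mul_single_of_ne _ _ _ _ hneE,
      add_zero, add_assoc, ← hE, hselfE, add_zero]
  have hQQ : (1 + F) * (1 + F) = 1 := by
    rw [add_mul, one_mul, mul_add, mul_one, hF,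
      Matrix.single_mul_single_of_ne _ _ _ _ hneE.symm, add_zero, add_assoc, ← hF, hselfF,
      add_zero]
  have hdetP : IsUnit (1 + E).det :=
    IsUnit.of_mul_eq_one _ (by rw [← Matrix.det_mul, hPP, Matrix.det_one])
  have hdetQ : IsUnit (1 + F).det :=
    IsUnit.of_mul_eq_one _ (by rw [← Matrix.det_mul, hQQ, Matrix.det_one])
  rw [Xmut_eq G v, Matrix.rank_mul_eq_left_of_isUnit_det _ _ hdetQ,
    Matrix.rank_mul_eq_right_of_isUnit_det _ _ hdetP]
end

section
/- Let G be a finite simple graph on the vertex set {1,…,n} containing an isolated vertex u, and let v, w be distinct vertices with u ∉ {v,w}. Then the rank over F_2 of X(μ_{v←w}(G)) equals the rank over F_2 of X(G). -/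
open Classical Finset

open Matrix
/-- if `G` contains an isolated vertex `u` and `v ≠ w` are vertices with
`u ∉ {v, w}`, then relative mutation `μ_{v←w}` preserves the rank of `X(G)` over `F_2`. -/
theorem stmt_7 {n : ℕ} (G : SimpleGraph (Fin n)) (u v w : Fin n)
    (hu : isIsolated G u) (hvw : v ≠ w) (huv : u ≠ v) (huw : u ≠ w) :
    (Xmat (relMutation G v w)).rank = (Xmat G).rank := by
  classical
  set v' : Fin (n+1) := v.castSucc with hv'
  set w' : Fin (n+1) := w.castSucc with hw'
  set u' : Fin (n+1) := u.castSucc with hu'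
  have hwv' : w' ≠ v' := fun h => hvw.symm (Fin.castSucc_injective n h)
  have huv' : u' ≠ v' := fun h => huv (Fin.castSucc_injective n h)
  set P : Matrix (Fin (n+1)) (Fin (n+1)) (ZMod 2) :=
    Matrix.single v' w' 1 + Matrix.single v' u' 1 with hP
  set E : Matrix (Fin (n+1)) (Fin (n+1)) (ZMod 2) := 1 + P with hE
  have two : ∀ x : ZMod 2, x + x = 0 := by decide
  have hPP : P * P = 0 := by
    rw [hP, Matrix.add_mul, Matrix.mul_add, Matrix.mul_add]
    rw [Matrix.single_mul_single_of_ne (h := hwv'), Matrix.single_mul_single_of_ne (h := hwv'),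
      Matrix.single_mul_single_of_ne (h := huv'), Matrix.single_mul_single_of_ne (h := huv')]
    simp
  have hEE : E * E = 1 := by
    have h1 : E * E = 1 + (P + P) + P * P := by rw [hE]; noncomm_ring
    rw [h1, hPP, add_zero]
    ext i j
    simp [Matrix.add_apply, two (P i j)]
  have hdet : IsUnit E.det := Matrix.isUnit_det_of_left_inverse hEE
  have hdetT : IsUnit Eᵀ.det := by rw [Matrix.det_transpose]; exact hdet
  -- symmetry of Xmat
  have hsym : (Xmat G)ᵀ = Xmat G := by
    ext i j
    simp only [Matrix.transpose_apply, Xmat, adjMat]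
    by_cases hi : (i : ℕ) < n <;> by_cases hj : (j : ℕ) < n <;>
      simp [hi, hj, G.adj_comm]
  -- entries of P * X
  have hPX : ∀ i j, (P * Xmat G) i j =
      if i = v' then Xmat G w' j + Xmat G u' j else 0 := by
    intro i j
    by_cases h : i = v'
    · subst h
      simp [hP, Matrix.add_mul]
    · simp [hP, Matrix.add_mul, Matrix.single_mul_apply_of_ne _ _ _ _ _ h, h]
  have hs : ∀ a b, Xmat G a b = Xmat G b a := by
    intro a b
    have h3 := congrFun (congrFun hsym b) a
    simpa [Matrix.transpose_apply] using h3
  have hXPT : ∀ i j, (Xmat G * Pᵀ) i j =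
      if j = v' then Xmat G i w' + Xmat G i u' else 0 := by
    intro i j
    have h2 : Xmat G * Pᵀ = (P * Xmat G)ᵀ := by
      rw [Matrix.transpose_mul, hsym]
    rw [h2, Matrix.transpose_apply, hPX]
    by_cases h : j = v'
    · simp only [h, if_true]
      rw [hs w' i, hs u' i]
    · simp [h]
  -- helper entry values
  have hadj_uw : ¬ G.Adj u w := hu w
  have hadj_wu : ¬ G.Adj w u := fun h => hu w h.symm
  have hXww : Xmat G w' w' = 0 := by
    simp [Xmat, hv', hw', hu', adjMat]
  have hXuw : Xmat G u' w' = 0 := by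
    simp [Xmat, hv', hw', hu', adjMat, hadj_uw]
  have hXwu : Xmat G w' u' = 0 := by
    simp [Xmat, hv', hw', hu', adjMat, hadj_wu]
  have hXuu : Xmat G u' u' = 0 := by
    simp [Xmat, hv', hw', hu', adjMat]
  have hPXPT : P * Xmat G * Pᵀ = 0 := by
    ext i j
    have : P * Xmat G * Pᵀ = P * (Xmat G * Pᵀ) := by rw [Matrix.mul_assoc]
    rw [this]
    by_cases h : i = v'
    · subst h
      simp only [hP, Matrix.add_mul, Matrix.add_apply,
        Matrix.single_mul_apply_same, one_mul]
      rw [hXPT, hXPT]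
      by_cases hj : j = v' <;> simp [hj, hXww, hXuw, hXwu, hXuu]
    · simp only [hP, Matrix.add_mul, Matrix.add_apply,
        Matrix.single_mul_apply_of_ne _ _ _ _ _ h, add_zero, Matrix.zero_apply]
  -- the key identity
  have expand : E * Xmat G * Eᵀ =
      Xmat G + P * Xmat G + Xmat G * Pᵀ + P * Xmat G * Pᵀ := by
    rw [hE, Matrix.transpose_add, Matrix.transpose_one]
    noncomm_ring
  have key : Xmat (relMutation G v w) = E * Xmat G * Eᵀ := by
    rw [expand, hPXPT, add_zero]
    ext i j
    rw [Matrix.add_apply, Matrix.add_apply, hPX, hXPT]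
    cases i using Fin.lastCases with
    | last =>
      have hne : Fin.last n ≠ v' := (Fin.castSucc_lt_last v).ne'
      cases j using Fin.lastCases with
      | last =>
        simp [Xmat, hne]
      | cast j₀ =>
        by_cases hjv : j₀.castSucc = v'
        · have h1 : Xmat G (Fin.last n) w' = 1 := by simp [Xmat, hw']
          have h2 : Xmat G (Fin.last n) u' = 1 := by simp [Xmat, hu']
          have h3 : Xmat (relMutation G v w) (Fin.last n) v' = 1 := by simp [Xmat, hv']
          have h4 : Xmat G (Fin.last n) v' = 1 := by simp [Xmat, hv']
          rw [if_neg hne, add_zero, if_pos hjv, hjv, h1, h2, h3, h4]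
          decide
        · rw [if_neg hne, add_zero, if_neg hjv, add_zero]
          simp [Xmat]
    | cast i₀ =>
      have hiv' : i₀.castSucc = v' ↔ i₀ = v :=
        ⟨fun h => Fin.castSucc_injective n h, fun h => by rw [h, hv']⟩
      cases j using Fin.lastCases with
      | last =>
        have hne : Fin.last n ≠ v' := (Fin.castSucc_lt_last v).ne'
        by_cases hiv : i₀.castSucc = v'
        · have h1 : Xmat G w' (Fin.last n) = 1 := by simp [Xmat, hw']
          have h2 : Xmat G u' (Fin.last n) = 1 := by simp [Xmat, hu']
          have h3 : Xmat (relMutation G v w) v' (Fin.last n) = 1 := by simp [Xmat, hv']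
          have h4 : Xmat G v' (Fin.last n) = 1 := by simp [Xmat, hv']
          rw [if_pos hiv, if_neg hne, add_zero, hiv, h1, h2, h3, h4]
          decide
        · rw [if_neg hiv, add_zero, if_neg hne, add_zero]
          simp [Xmat]
      | cast j₀ =>
        have hjv' : j₀.castSucc = v' ↔ j₀ = v :=
          ⟨fun h => Fin.castSucc_injective n h, fun h => by rw [h, hv']⟩
        have hXcc : ∀ (H : SimpleGraph (Fin n)) (a b : Fin n),
            Xmat H a.castSucc b.castSucc = adjMat H a b := by
          intro H a b
          simp only [Xmat, Fin.coe_castSucc, Fin.is_lt, dif_pos]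
        rw [hXcc, hXcc]
        rw [show Xmat G w' j₀.castSucc = adjMat G w j₀ from hXcc G w j₀,
          show Xmat G u' j₀.castSucc = adjMat G u j₀ from hXcc G u j₀,
          show Xmat G i₀.castSucc w' = adjMat G i₀ w from hXcc G i₀ w,
          show Xmat G i₀.castSucc u' = adjMat G i₀ u from hXcc G i₀ u]
        have hadjU : adjMat G u j₀ = 0 := by simp [adjMat, hu j₀]
        have hniu : ¬ G.Adj i₀ u := fun h => hu i₀ h.symm
        have hadjU2 : adjMat G i₀ u = 0 := by simp [adjMat, hniu]
        rw [hadjU, hadjU2, add_zero, add_zero]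
        simp only [hiv', hjv']
        by_cases hi : i₀ = v <;> by_cases hj : j₀ = v
        · rw [if_pos hi, if_pos hj, hi, hj]
          have h3 : adjMat (relMutation G v w) v v = 0 := by simp [adjMat]
          have h4 : adjMat G v v = 0 := by simp [adjMat]
          have h5 : adjMat G w v = adjMat G v w := by
            simp only [adjMat]; rw [G.adj_comm]
          rw [h3, h4, h5, zero_add, two]
        · rw [if_pos hi, if_neg hj, add_zero, hi]
          have hjv2 : v ≠ j₀ := fun h => hj h.symm
          simp only [adjMat, relMutation]
          by_cases h1 : G.Adj v j₀ <;> by_cases h2 : G.Adj w j₀ <;>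
            simp [h1, h2, hjv2, hj] <;> decide
        · rw [if_neg hi, if_pos hj, add_zero, hj]
          have hiv2 : i₀ ≠ v := hi
          simp only [adjMat, relMutation]
          by_cases h1 : G.Adj i₀ v <;> by_cases h2 : G.Adj i₀ w <;>
            simp [h1, h2, hi, hiv2, G.adj_comm v i₀, G.adj_comm w i₀,
              fun h : v = i₀ => hi h.symm] <;> decide
        · rw [if_neg hi, if_neg hj, add_zero, add_zero]
          simp only [adjMat, relMutation]
          by_cases h : G.Adj i₀ j₀
          · simp [h, hi, hj, h.ne]
          · simp [h, hi, hj]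
  rw [key, Matrix.rank_mul_eq_left_of_isUnit_det _ _ hdetT,
    Matrix.rank_mul_eq_right_of_isUnit_det _ _ hdet]
end

section
/- Let G be a finite simple graph and let v be any vertex of G. Then for every 3-element subset {i,j,k} of the vertex set, the induced subgraph of G on {i,j,k} contains an even number of edges if and only if the induced subgraph of μ_v(G) on {i,j,k} contains an even number of edges. (This expresses combinatorially that mutation does not change the point scheme of the associated (±1)-skew polynomial algebra.) -/
open Classical Finset

/-- for any vertex `v` and any 3-element subset `{i, j, k}` of the
vertices, the induced subgraph of `G` on `{i, j, k}` has an even number of edges iff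
the induced subgraph of `μ_v(G)` on `{i, j, k}` does. -/
theorem stmt_13 {n : ℕ} (G : SimpleGraph (Fin n)) (v : Fin n) (i j k : Fin n)
    (hij : i ≠ j) (hik : i ≠ k) (hjk : j ≠ k) :
    evenTriple G i j k ↔ evenTriple (mutation G v) i j k := by
  have hadj : ∀ x y : Fin n, x ≠ v → y ≠ v →
      ((mutation G v).Adj x y ↔ G.Adj x y) := by
    intro x y hx hy
    constructor
    · rintro ⟨_, h | h | ⟨_, _, h⟩⟩
      · exact absurd h.1 hx
      · exact absurd h.1 hy
      · exact h
    · intro h; exact ⟨G.ne_of_adj h, Or.inr (Or.inr ⟨hx, hy, h⟩)⟩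
  have hflip : ∀ y : Fin n, y ≠ v → ((mutation G v).Adj v y ↔ ¬ G.Adj v y) := by
    intro y hy
    constructor
    · rintro ⟨_, h | h | ⟨h, _, _⟩⟩
      · exact h.2
      · exact absurd h.1 hy
      · exact absurd rfl h
    · intro h; exact ⟨Ne.symm hy, Or.inl ⟨rfl, h⟩⟩
  have hflip' : ∀ y : Fin n, y ≠ v → ((mutation G v).Adj y v ↔ ¬ G.Adj y v) := by
    intro y hy
    rw [SimpleGraph.adj_comm, hflip y hy, SimpleGraph.adj_comm]
  unfold evenTriple
  by_cases hvi : v = i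
  · subst hvi
    rw [hflip j (Ne.symm hij), hflip k (Ne.symm hik), hadj j k hij.symm hik.symm]
    by_cases ha : G.Adj v j <;> by_cases hb : G.Adj v k <;> by_cases hc : G.Adj j k <;>
      simp [ha, hb, hc] <;> decide
  · by_cases hvj : v = j
    · subst hvj
      rw [hflip' i (Ne.symm hvi), hflip k (Ne.symm hjk), hadj i k (Ne.symm hvi) (Ne.symm hjk)]
      by_cases ha : G.Adj i v <;> by_cases hb : G.Adj i k <;> by_cases hc : G.Adj v k <;>
        simp [ha, hb, hc] <;> decide
    · by_cases hvk : v = k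
      · subst hvk
        rw [hflip' i (Ne.symm hvi), hflip' j (Ne.symm hvj), hadj i j (Ne.symm hvi) (Ne.symm hvj)]
        by_cases ha : G.Adj i j <;> by_cases hb : G.Adj i v <;> by_cases hc : G.Adj j v <;>
          simp [ha, hb, hc] <;> decide
      · rw [hadj i j (Ne.symm hvi) (Ne.symm hvj), hadj i k (Ne.symm hvi) (Ne.symm hvk), hadj j k (Ne.symm hvj) (Ne.symm hvk)]
end

section
/- Let G be a finite simple graph. Then for every vertex v, ℓ(μ_v(G)) = ℓ(G). -/
open Classical Finset

lemma mut_adj {n : ℕ} (G : SimpleGraph (Fin n)) (v x y : Fin n) :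
    (mutation G v).Adj x y ↔ x ≠ y ∧
      ((x = v ∧ ¬ G.Adj v y) ∨ (y = v ∧ ¬ G.Adj v x) ∨ (x ≠ v ∧ y ≠ v ∧ G.Adj x y)) :=
  Iff.rfl

lemma evenTriple_mut {n : ℕ} (G : SimpleGraph (Fin n)) (v i j k : Fin n)
    (hij : i ≠ j) (hik : i ≠ k) (hjk : j ≠ k) :
    evenTriple (mutation G v) i j k ↔ evenTriple G i j k := by
  unfold evenTriple
  by_cases hi : i = v <;> by_cases hj : j = v <;> by_cases hk : k = v <;>
    simp only [mut_adj, hi, hj, hk] <;>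
    first
    | (exact absurd rfl (by simp_all))
    | (by_cases h1 : G.Adj i j <;> by_cases h2 : G.Adj i k <;> by_cases h3 : G.Adj j k <;>
        simp_all [G.adj_comm, Nat.even_add_one, parity_simps])

/-- `ℓ(μ_v(G)) = ℓ(G)` for every vertex `v`. -/
theorem stmt_14 {n : ℕ} (G : SimpleGraph (Fin n)) (v : Fin n) :
    ell (mutation G v) = ell G := by
  unfold ell
  congr 1
  apply Finset.filter_congr
  intro p _
  have hij : p.1 ≠ p.2 → True := fun _ => trivial
  constructor <;> rintro ⟨hlt, h⟩ <;> refine ⟨hlt, fun k hk1 hk2 => ?_⟩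
  · exact (evenTriple_mut G v p.1 p.2 k hlt.ne (Ne.symm hk1) (Ne.symm hk2)).mp (h k hk1 hk2)
  · exact (evenTriple_mut G v p.1 p.2 k hlt.ne (Ne.symm hk1) (Ne.symm hk2)).mpr (h k hk1 hk2)
end

section
/- Let G be a finite simple graph containing at least one isolated vertex and assume j(G) > 0. Let {u_1, u_2} ∈ J(G) and let u_2, …, u_m be all the vertices u_i ≠ u_1 with N_G(u_1) = N_G(u_i). Let G' = μ_{u_m←u_1}(⋯ μ_{u_3←u_1}(μ_{u_2←u_1}(G)) ⋯). Then j(G') < j(G) and ℓ(G') ≥ ℓ(G). -/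
open Classical Finset

section auxlemmas

variable {n : ℕ}

lemma relMutation_adj_eq (G : SimpleGraph (Fin n)) (x u1 a b : Fin n)
    (h : ∀ w, G.Adj u1 w ↔ G.Adj x w) :
    (relMutation G x u1).Adj a b ↔ (G.Adj a b ∧ a ≠ x ∧ b ≠ x) := by
  have ha := h a
  have hb := h b
  have hab : G.Adj a b → a ≠ b := fun h' => G.ne_of_adj h'
  constructor
  · rintro ⟨hne, h'⟩
    rcases h' with ⟨rfl, h2⟩ | ⟨rfl, h2⟩ | ⟨h1, h2, h3⟩
    · tauto
    · tauto
    · tauto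
  · rintro ⟨h1, h2, h3⟩
    exact ⟨hab h1, Or.inr (Or.inr ⟨h2, h3, h1⟩)⟩

lemma fold_adj (u1 : Fin n) :
    ∀ (l : List (Fin n)) (G : SimpleGraph (Fin n)), l.Nodup → u1 ∉ l →
    (∀ x ∈ l, ∀ w, G.Adj u1 w ↔ G.Adj x w) →
    ∀ a b, (l.foldl (fun H x => relMutation H x u1) G).Adj a b ↔
      (G.Adj a b ∧ a ∉ l ∧ b ∉ l) := by
  intro l
  induction l with
  | nil => intro G _ _ _ a b; simp
  | cons x t ih =>
    intro G hnd hu hN a b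
    simp only [List.foldl_cons]
    have hx : ∀ w, G.Adj u1 w ↔ G.Adj x w := hN x (by simp)
    have hH : ∀ a b, (relMutation G x u1).Adj a b ↔ (G.Adj a b ∧ a ≠ x ∧ b ≠ x) :=
      fun a b => relMutation_adj_eq G x u1 a b hx
    have hu1x : u1 ≠ x := fun h => hu (by simp [h])
    have ht : ∀ y ∈ t, ∀ w,
        (relMutation G x u1).Adj u1 w ↔ (relMutation G x u1).Adj y w := by
      intro y hy w
      have hyx : y ≠ x := fun h => (List.nodup_cons.mp hnd).1 (h ▸ hy)
      have hy' : ∀ w, G.Adj u1 w ↔ G.Adj y w := hN y (by simp [hy])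
      rw [hH, hH]
      constructor
      · rintro ⟨h1, _, h3⟩
        exact ⟨(hy' w).mp h1, hyx, h3⟩
      · rintro ⟨h1, _, h3⟩
        exact ⟨(hy' w).mpr h1, hu1x, h3⟩
    rw [ih (relMutation G x u1) (List.nodup_cons.mp hnd).2
      (fun h => hu (by simp [h])) ht a b, hH]
    simp only [List.mem_cons]
    constructor
    · rintro ⟨⟨h1, h2, h3⟩, h4, h5⟩
      exact ⟨h1, by tauto, by tauto⟩
    · rintro ⟨h1, h2, h3⟩
      exact ⟨⟨h1, by tauto, by tauto⟩, by tauto, by tauto⟩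

/-- sorted pair -/
noncomputable def spair (a b : Fin n) : Fin n × Fin n := if a < b then (a, b) else (b, a)

lemma spair_cases (a b : Fin n) : spair a b = (a, b) ∨ spair a b = (b, a) := by
  unfold spair; split <;> simp

lemma spair_lt {a b : Fin n} (h : a ≠ b) : (spair a b).1 < (spair a b).2 := by
  unfold spair
  rcases lt_or_gt_of_ne h with h' | h'
  · rw [if_pos h']; exact h'
  · rw [if_neg (by exact fun hc => absurd (lt_trans hc h') (lt_irrefl a))]; exact h'

lemma spair_inj_right {u x y : Fin n} (hx : u ≠ x) (hy : u ≠ y)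
    (h : spair u x = spair u y) : x = y := by
  unfold spair at h
  split_ifs at h with h1 h2 h2 <;>
    simp only [Prod.mk.injEq] at h
  · exact h.2
  · exact absurd h.1 hy
  · exact absurd h.1.symm hx
  · exact h.1

/-- the injection used in the proof of `ell G ≤ ell G'` -/
noncomputable def Fmap (u u1 : Fin n) (l : List (Fin n)) (p : Fin n × Fin n) :
    Fin n × Fin n :=
  if p.1 = u1 ∧ p.2 ∈ l then spair u p.2
  else if p.2 = u1 ∧ p.1 ∈ l then spair u p.1
  else p

end auxlemmas

/-- let `G` contain an isolated vertex, `j(G) > 0`, let `u₁` be a vertex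
and `l = [u₂, …, uₘ]` (nonempty, no repetitions, not containing `u₁`) consist of all
vertices `≠ u₁` whose neighborhood equals `N_G(u₁) ≠ ∅` (so `{u₁, u₂} ∈ J(G)`), and
let `G' = μ_{uₘ←u₁}(⋯ μ_{u₂←u₁}(G) ⋯)`. Then `j(G') < j(G)` and `ℓ(G') ≥ ℓ(G)`. -/
theorem stmt_16 {n : ℕ} (G : SimpleGraph (Fin n)) (hiso : ∃ u, isIsolated G u)
    (hj : 0 < jnum G) (u1 : Fin n) (l : List (Fin n)) (hl : l ≠ [])
    (hnodup : (u1 :: l).Nodup) (hne : G.neighborSet u1 ≠ ∅)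
    (hall : ∀ w : Fin n, w ≠ u1 →
      (G.neighborSet w = G.neighborSet u1 ↔ w ∈ l)) :
    jnum (l.foldl (fun H x => relMutation H x u1) G) < jnum G ∧
    ell G ≤ ell (l.foldl (fun H x => relMutation H x u1) G) := by
  classical
  obtain ⟨u, hu⟩ := hiso
  have hu1l : u1 ∉ l := (List.nodup_cons.mp hnodup).1
  have hlnd : l.Nodup := (List.nodup_cons.mp hnodup).2
  have hNl : ∀ x ∈ l, ∀ w, G.Adj u1 w ↔ G.Adj x w := by
    intro x hx w
    have hxu1 : x ≠ u1 := fun h => hu1l (h ▸ hx)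
    have hNeq : G.neighborSet x = G.neighborSet u1 := (hall x hxu1).mpr hx
    have := Set.ext_iff.mp hNeq w
    simpa [SimpleGraph.mem_neighborSet] using this.symm
  set G' := l.foldl (fun H x => relMutation H x u1) G with hG'def
  have hadj : ∀ a b, G'.Adj a b ↔ (G.Adj a b ∧ a ∉ l ∧ b ∉ l) :=
    fold_adj u1 l G hlnd hu1l hNl
  have hAdj' : ∀ x ∈ l, ∀ v, G.Adj v x ↔ G.Adj v u1 := by
    intro x hx v
    rw [G.adj_comm v x, G.adj_comm v u1]
    exact (hNl x hx v).symm
  have hnal : ∀ x ∈ l, ¬ G.Adj u1 x := by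
    intro x hx h
    exact G.loopless.irrefl u1 ((hAdj' x hx u1).mp h)
  obtain ⟨w0, hw0⟩ := Set.nonempty_iff_ne_empty.mpr hne
  have hw0adj : G.Adj u1 w0 := hw0
  have hw0l : w0 ∉ l := fun h => hnal w0 h hw0adj
  have hNS_l : ∀ x ∈ l, G'.neighborSet x = ∅ := by
    intro x hx
    ext w
    simp only [SimpleGraph.mem_neighborSet, Set.mem_empty_iff_false, iff_false]
    intro h
    exact ((hadj x w).mp h).2.1 hx
  have keyNS : ∀ v w : Fin n, v ∉ l → w ∉ l →
      (G'.neighborSet v = G'.neighborSet w ↔ G.neighborSet v = G.neighborSet w) := by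
    intro v w hv hw
    constructor
    · intro h
      ext k
      simp only [SimpleGraph.mem_neighborSet]
      by_cases hk : k ∈ l
      · rw [hAdj' k hk v, hAdj' k hk w]
        have h1 := Set.ext_iff.mp h u1
        simp only [SimpleGraph.mem_neighborSet, hadj] at h1
        constructor
        · intro h2; exact (h1.mp ⟨h2, hv, hu1l⟩).1
        · intro h2; exact (h1.mpr ⟨h2, hw, hu1l⟩).1
      · have h1 := Set.ext_iff.mp h k
        simp only [SimpleGraph.mem_neighborSet, hadj] at h1
        constructor
        · intro h2; exact (h1.mp ⟨h2, hv, hk⟩).1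
        · intro h2; exact (h1.mpr ⟨h2, hw, hk⟩).1
    · intro h
      ext k
      simp only [SimpleGraph.mem_neighborSet, hadj]
      have := Set.ext_iff.mp h k
      simp only [SimpleGraph.mem_neighborSet] at this
      tauto
  constructor
  · -- jnum part
    have hsub : Jfinset G' ⊆ Jfinset G := by
      intro p hp
      simp only [Jfinset, mem_filter, mem_univ, true_and] at hp ⊢
      obtain ⟨h1, h2, h3⟩ := hp
      obtain ⟨w, hwmem⟩ := Set.nonempty_iff_ne_empty.mpr h3
      have hw' : G'.Adj p.1 w := hwmem
      rw [hadj] at hw'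
      have hp1 : p.1 ∉ l := hw'.2.1
      have hp2 : p.2 ∉ l := by
        have hmem2 : w ∈ G'.neighborSet p.2 := h2 ▸ hwmem
        exact ((hadj p.2 w).mp hmem2).2.1
      refine ⟨h1, (keyNS p.1 p.2 hp1 hp2).mp h2, ?_⟩
      exact Set.nonempty_iff_ne_empty.mp ⟨w, hw'.1⟩
    obtain ⟨u2, hu2⟩ : ∃ u2, u2 ∈ l := by
      cases l with
      | nil => exact absurd rfl hl
      | cons a t => exact ⟨a, by simp⟩
    have hu2u1 : u2 ≠ u1 := fun h => hu1l (h ▸ hu2)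
    have hNu2 : G.neighborSet u2 = G.neighborSet u1 := (hall u2 hu2u1).mpr hu2
    have hJ2 : G'.neighborSet u2 = ∅ := hNS_l u2 hu2
    have hNu1' : G'.neighborSet u1 ≠ ∅ :=
      Set.nonempty_iff_ne_empty.mp ⟨w0, (hadj u1 w0).mpr ⟨hw0adj, hu1l, hw0l⟩⟩
    have hnotsub : ¬ Jfinset G ⊆ Jfinset G' := by
      intro hss
      rcases lt_or_gt_of_ne hu2u1 with hlt | hgt
      · have hmem : (u2, u1) ∈ Jfinset G := by
          simp only [Jfinset, mem_filter, mem_univ, true_and]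
          exact ⟨hlt, hNu2, by rw [hNu2]; exact hne⟩
        have h' := hss hmem
        simp only [Jfinset, mem_filter, mem_univ, true_and] at h'
        exact hNu1' (h'.2.1.symm.trans hJ2)
      · have hmem : (u1, u2) ∈ Jfinset G := by
          simp only [Jfinset, mem_filter, mem_univ, true_and]
          exact ⟨hgt, hNu2.symm, hne⟩
        have h' := hss hmem
        simp only [Jfinset, mem_filter, mem_univ, true_and] at h'
        exact hNu1' (h'.2.1.trans hJ2)
    exact Finset.card_lt_card (Finset.ssubset_def.mpr ⟨hsub, hnotsub⟩)
  · -- ell part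
    have ellchar : ∀ (H : SimpleGraph (Fin n)) (v : Fin n), isIsolated H v →
        ell H = ((univ : Finset (Fin n × Fin n)).filter
          (fun p => p.1 < p.2 ∧ H.neighborSet p.1 = H.neighborSet p.2)).card := by
      intro H v hv
      unfold ell
      congr 1
      apply Finset.filter_congr
      intro p _
      constructor
      · rintro ⟨h1, h2⟩
        refine ⟨h1, ?_⟩
        have hnadj : ¬ H.Adj p.1 p.2 := by
          intro hadj'
          have hv1 : v ≠ p.1 := fun h => hv p.2 (h ▸ hadj')
          have hv2 : v ≠ p.2 := fun h => hv p.1 (h ▸ hadj'.symm)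
          have het := h2 v hv1 hv2
          unfold evenTriple at het
          have n1 : ¬ H.Adj p.1 v := fun h => hv p.1 h.symm
          have n2 : ¬ H.Adj p.2 v := fun h => hv p.2 h.symm
          rw [if_pos hadj', if_neg n1, if_neg n2] at het
          simp at het
        ext k
        simp only [SimpleGraph.mem_neighborSet]
        by_cases hk1 : k = p.1
        · subst hk1
          constructor
          · intro h; exact absurd h (H.loopless.irrefl p.1)
          · intro h; exact absurd h.symm hnadj
        by_cases hk2 : k = p.2
        · subst hk2
          constructor
          · intro h; exact absurd h hnadj
          · intro h; exact absurd h (H.loopless.irrefl p.2)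
        · have het := h2 k hk1 hk2
          unfold evenTriple at het
          by_cases ha : H.Adj p.1 k <;> by_cases hb : H.Adj p.2 k
          · exact iff_of_true ha hb
          · rw [if_neg hnadj, if_pos ha, if_neg hb] at het
            exact absurd het (by decide)
          · rw [if_neg hnadj, if_neg ha, if_pos hb] at het
            exact absurd het (by decide)
          · exact iff_of_false ha hb
      · rintro ⟨h1, h2⟩
        refine ⟨h1, fun k hk1 hk2 => ?_⟩
        have heq : ∀ w, H.Adj p.1 w ↔ H.Adj p.2 w := by
          intro w
          have := Set.ext_iff.mp h2 w
          simpa [SimpleGraph.mem_neighborSet] using this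
        have hnadj : ¬ H.Adj p.1 p.2 := fun h => H.loopless.irrefl p.2 ((heq p.2).mp h)
        unfold evenTriple
        rw [if_neg hnadj]
        by_cases ha : H.Adj p.1 k
        · rw [if_pos ha, if_pos ((heq k).mp ha)]; decide
        · rw [if_neg ha, if_neg (fun h => ha ((heq k).mpr h))]; decide
    have huu1 : u ≠ u1 := fun h => hu w0 (h ▸ hw0adj)
    have hul : u ∉ l := fun h => hu w0 ((hNl u h w0).mp hw0adj)
    have hu' : isIsolated G' u := fun w h => hu w ((hadj u w).mp h).1
    have hNu'e : G'.neighborSet u = ∅ := by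
      ext w
      simp only [SimpleGraph.mem_neighborSet, Set.mem_empty_iff_false, iff_false]
      exact hu' w
    rw [ellchar G u hu, ellchar G' u hu']
    apply Finset.card_le_card_of_injOn (Fmap u u1 l)
    · -- maps to
      intro p hp
      simp only [mem_coe, mem_filter, mem_univ, true_and] at hp ⊢
      obtain ⟨hlt, hN⟩ := hp
      unfold Fmap
      split_ifs with hA hB
      · have hux : u ≠ p.2 := fun h => hul (h ▸ hA.2)
        refine ⟨spair_lt hux, ?_⟩
        rcases spair_cases u p.2 with h | h <;> rw [h]
        · exact hNu'e.trans (hNS_l p.2 hA.2).symm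
        · exact (hNS_l p.2 hA.2).trans hNu'e.symm
      · have hux : u ≠ p.1 := fun h => hul (h ▸ hB.2)
        refine ⟨spair_lt hux, ?_⟩
        rcases spair_cases u p.1 with h | h <;> rw [h]
        · exact hNu'e.trans (hNS_l p.1 hB.2).symm
        · exact (hNS_l p.1 hB.2).trans hNu'e.symm
      · refine ⟨hlt, ?_⟩
        by_cases h1 : p.1 ∈ l <;> by_cases h2 : p.2 ∈ l
        · rw [hNS_l p.1 h1, hNS_l p.2 h2]
        · exfalso
          have hN1 : G.neighborSet p.1 = G.neighborSet u1 :=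
            (hall p.1 (fun h => hu1l (h ▸ h1))).mpr h1
          by_cases h3 : p.2 = u1
          · exact hB ⟨h3, h1⟩
          · exact h2 ((hall p.2 h3).mp (hN.symm.trans hN1))
        · exfalso
          have hN2 : G.neighborSet p.2 = G.neighborSet u1 :=
            (hall p.2 (fun h => hu1l (h ▸ h2))).mpr h2
          by_cases h3 : p.1 = u1
          · exact hA ⟨h3, h2⟩
          · exact h1 ((hall p.1 h3).mp (hN.trans hN2))
        · exact (keyNS p.1 p.2 h1 h2).mpr hN
    · -- injective
      intro p hp q hq hFeq
      simp only [coe_filter, Set.mem_setOf_eq, mem_univ, true_and] at hp hq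
      obtain ⟨hplt, hpN⟩ := hp
      obtain ⟨hqlt, hqN⟩ := hq
      have hCpure : ∀ r : Fin n × Fin n, r.1 < r.2 →
          G.neighborSet r.1 = G.neighborSet r.2 →
          ¬(r.1 = u1 ∧ r.2 ∈ l) → ¬(r.2 = u1 ∧ r.1 ∈ l) →
          ((r.1 ∈ l ∧ r.2 ∈ l) ∨ (r.1 ∉ l ∧ r.2 ∉ l)) := by
        intro r hlt hN hA hB
        by_cases h1 : r.1 ∈ l <;> by_cases h2 : r.2 ∈ l
        · exact Or.inl ⟨h1, h2⟩
        · exfalso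
          have hN1 : G.neighborSet r.1 = G.neighborSet u1 :=
            (hall r.1 (fun h => hu1l (h ▸ h1))).mpr h1
          by_cases h3 : r.2 = u1
          · exact hB ⟨h3, h1⟩
          · exact h2 ((hall r.2 h3).mp (hN.symm.trans hN1))
        · exfalso
          have hN2 : G.neighborSet r.2 = G.neighborSet u1 :=
            (hall r.2 (fun h => hu1l (h ▸ h2))).mpr h2
          by_cases h3 : r.1 = u1
          · exact hA ⟨h3, h2⟩
          · exact h1 ((hall r.1 h3).mp (hN.trans hN2))
        · exact Or.inr ⟨h1, h2⟩
      have mixed_ne : ∀ (x : Fin n), x ∈ l → ∀ r : Fin n × Fin n, r.1 < r.2 →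
          G.neighborSet r.1 = G.neighborSet r.2 →
          ¬(r.1 = u1 ∧ r.2 ∈ l) → ¬(r.2 = u1 ∧ r.1 ∈ l) →
          spair u x ≠ r := by
        intro x hx r hlt hN hA hB hcon
        rcases spair_cases u x with h | h <;> rw [h] at hcon <;> subst hcon <;>
          rcases hCpure _ hlt hN hA hB with ⟨h1, h2⟩ | ⟨h1, h2⟩
        · exact hul h1
        · exact h2 hx
        · exact hul h2
        · exact h1 hx
      by_cases hpA : p.1 = u1 ∧ p.2 ∈ l
      · by_cases hqA : q.1 = u1 ∧ q.2 ∈ l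
        · -- A A
          unfold Fmap at hFeq
          rw [if_pos hpA, if_pos hqA] at hFeq
          have hup : u ≠ p.2 := fun h => hul (h ▸ hpA.2)
          have huq : u ≠ q.2 := fun h => hul (h ▸ hqA.2)
          exact Prod.ext (hpA.1.trans hqA.1.symm) (spair_inj_right hup huq hFeq)
        · by_cases hqB : q.2 = u1 ∧ q.1 ∈ l
          · -- A B
            unfold Fmap at hFeq
            rw [if_pos hpA, if_neg hqA, if_pos hqB] at hFeq
            have hup : u ≠ p.2 := fun h => hul (h ▸ hpA.2)
            have huq : u ≠ q.1 := fun h => hul (h ▸ hqB.2)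
            have h2 := spair_inj_right hup huq hFeq
            exfalso
            rw [hpA.1] at hplt
            rw [hqB.1] at hqlt
            rw [h2] at hplt
            exact lt_irrefl u1 (lt_trans hplt hqlt)
          · -- A C
            unfold Fmap at hFeq
            rw [if_pos hpA, if_neg hqA, if_neg hqB] at hFeq
            exact absurd hFeq (mixed_ne p.2 hpA.2 q hqlt hqN hqA hqB)
      · by_cases hpB : p.2 = u1 ∧ p.1 ∈ l
        · by_cases hqA : q.1 = u1 ∧ q.2 ∈ l
          · -- B A
            unfold Fmap at hFeq
            rw [if_neg hpA, if_pos hpB, if_pos hqA] at hFeq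
            have hup : u ≠ p.1 := fun h => hul (h ▸ hpB.2)
            have huq : u ≠ q.2 := fun h => hul (h ▸ hqA.2)
            have h2 := spair_inj_right hup huq hFeq
            exfalso
            rw [hpB.1] at hplt
            rw [hqA.1] at hqlt
            rw [h2] at hplt
            exact lt_irrefl u1 (lt_trans hqlt hplt)
          · by_cases hqB : q.2 = u1 ∧ q.1 ∈ l
            · -- B B
              unfold Fmap at hFeq
              rw [if_neg hpA, if_pos hpB, if_neg hqA, if_pos hqB] at hFeq
              have hup : u ≠ p.1 := fun h => hul (h ▸ hpB.2)
              have huq : u ≠ q.1 := fun h => hul (h ▸ hqB.2)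
              exact Prod.ext (spair_inj_right hup huq hFeq) (hpB.1.trans hqB.1.symm)
            · -- B C
              unfold Fmap at hFeq
              rw [if_neg hpA, if_pos hpB, if_neg hqA, if_neg hqB] at hFeq
              exact absurd hFeq (mixed_ne p.1 hpB.2 q hqlt hqN hqA hqB)
        · by_cases hqA : q.1 = u1 ∧ q.2 ∈ l
          · -- C A
            unfold Fmap at hFeq
            rw [if_neg hpA, if_neg hpB, if_pos hqA] at hFeq
            exact absurd hFeq.symm (mixed_ne q.2 hqA.2 p hplt hpN hpA hpB)
          · by_cases hqB : q.2 = u1 ∧ q.1 ∈ l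
            · -- C B
              unfold Fmap at hFeq
              rw [if_neg hpA, if_neg hpB, if_neg hqA, if_pos hqB] at hFeq
              exact absurd hFeq.symm (mixed_ne q.1 hqB.2 p hplt hpN hpA hpB)
            · -- C C
              unfold Fmap at hFeq
              rw [if_neg hpA, if_neg hpB, if_neg hqA, if_neg hqB] at hFeq
              exact hFeq
end
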